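/- arXiv:0903.1174 — 5 statements merged into one kernel-verified Lean document; each statement's English description precedes it below -/
import Mathlib

section
/- For x > 0, the inequality ln x - 1/x < ψ(x) < ln x - 1/(2x) holds, where ψ is the digamma function. -/
noncomputable def psi (x : ℝ) : ℝ := deriv (fun y => Real.log (Real.Gamma y)) x

open Real Set Filter Topology Finset

namespace DigammaAux

lemma diff_logGamma {x : ℝ} (hx : 0 < x) :
    DifferentiableAt ℝ (fun y => Real.log (Real.Gamma y)) x := by
  refine (Real.differentiableAt_Gamma ?_).log (Real.Gamma_ne_zero ?_) <;>
    exact fun m => ne_of_gt (lt_of_le_of_lt (neg_nonpos.mpr m.cast_nonneg) hx)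

lemma psi_add_one {x : ℝ} (hx : 0 < x) : psi (x + 1) = psi x + 1 / x := by
  unfold psi
  rw [← deriv_comp_add_const, one_div, ← Real.deriv_log,
    ← deriv_add (diff_logGamma hx) (Real.differentiableAt_log hx.ne')]
  apply Filter.EventuallyEq.deriv_eq
  filter_upwards [eventually_gt_nhds hx] with y hy
  rw [Real.Gamma_add_one hy.ne', Real.log_mul hy.ne' (Real.Gamma_pos_of_pos hy).ne', add_comm]
  rfl

lemma psi_le_log {y : ℝ} (hy : 0 < y) : psi y ≤ Real.log y := by
  have h := Real.convexOn_log_Gamma.deriv_le_slope (mem_Ioi.mpr hy)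
    (mem_Ioi.mpr (by linarith : (0:ℝ) < y + 1)) (by linarith) (diff_logGamma hy)
  rw [slope_def_field, add_sub_cancel_left, div_one, Function.comp_apply, Function.comp_apply,
    Real.Gamma_add_one hy.ne', Real.log_mul hy.ne' (Real.Gamma_pos_of_pos hy).ne',
    add_sub_cancel_right] at h
  exact h

lemma log_le_psi {y : ℝ} (hy : 0 < y) : Real.log y ≤ psi (y + 1) := by
  have h := Real.convexOn_log_Gamma.slope_le_deriv (mem_Ioi.mpr hy)
    (mem_Ioi.mpr (by linarith : (0:ℝ) < y + 1)) (by linarith)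
    (diff_logGamma (by linarith : (0:ℝ) < y + 1))
  rw [slope_def_field, add_sub_cancel_left, div_one, Function.comp_apply, Function.comp_apply,
    Real.Gamma_add_one hy.ne', Real.log_mul hy.ne' (Real.Gamma_pos_of_pos hy).ne',
    add_sub_cancel_right] at h
  exact h

/-- The error term `D y = psi y - log y`. -/
noncomputable def D (y : ℝ) : ℝ := psi y - Real.log y

/-- One-step increment `t a = log (a+1) - log a - 1/a`. -/
noncomputable def t (a : ℝ) : ℝ := Real.log (a + 1) - Real.log a - 1 / a

lemma D_step {z : ℝ} (hz : 0 < z) : D z = D (z + 1) + t z := by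
  unfold D t
  rw [psi_add_one hz]
  ring

lemma D_eq (y : ℝ) (hy : 0 < y) (n : ℕ) :
    D y = D (y + n) + ∑ k ∈ Finset.range n, t (y + k) := by
  induction n with
  | zero => simp
  | succ n ih =>
    rw [ih, Finset.sum_range_succ, D_step (show (0:ℝ) < y + n by positivity)]
    push_cast
    ring

lemma log_lt_half_sub_inv {s : ℝ} (hs : 1 < s) : Real.log s < (s - s⁻¹) / 2 := by
  have key : StrictMonoOn (fun u : ℝ => (u - u⁻¹) / 2 - Real.log u) (Set.Ici 1) := by
    apply strictMonoOn_of_deriv_pos (convex_Ici 1)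
    · apply ContinuousOn.sub
      · exact (continuousOn_id.sub (continuousOn_id.inv₀
          (fun u hu => by exact ne_of_gt (lt_of_lt_of_le one_pos hu)))).div_const 2
      · exact Real.continuousOn_log.mono (fun u hu => by
          simp only [mem_compl_iff, mem_singleton_iff]
          exact ne_of_gt (lt_of_lt_of_le one_pos hu))
    · intro u hu
      rw [interior_Ici] at hu
      have hu1 : 1 < u := hu
      have hu0 : 0 < u := lt_trans one_pos hu1
      have hd : HasDerivAt (fun u : ℝ => (u - u⁻¹) / 2 - Real.log u)
          ((1 - -(u ^ 2)⁻¹) / 2 - u⁻¹) u :=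
        (((hasDerivAt_id u).sub (hasDerivAt_inv hu0.ne')).div_const 2).sub
          (Real.hasDerivAt_log hu0.ne')
      rw [hd.deriv]
      have : (1 - -(u ^ 2)⁻¹) / 2 - u⁻¹ = (u - 1) ^ 2 / (2 * u ^ 2) := by
        field_simp
        ring
      rw [this]
      exact div_pos (pow_pos (by linarith) 2) (by positivity)
  have h := key (self_mem_Ici) (le_of_lt hs) hs
  simp only [inv_one, sub_self, zero_div, Real.log_one, sub_zero, zero_sub] at h
  linarith

lemma t_lt {a : ℝ} (ha : 0 < a) : t a < -(1 / (2 * a)) + 1 / (2 * (a + 1)) := by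
  have h1 : (1:ℝ) < (a + 1) / a := by
    rw [lt_div_iff₀ ha]; linarith
  have h := log_lt_half_sub_inv h1
  rw [Real.log_div (by linarith) ha.ne'] at h
  have he : (((a + 1) / a) - ((a + 1) / a)⁻¹) / 2 = 1 / (2 * a) + 1 / (2 * (a + 1)) := by
    rw [inv_div]
    field_simp
    ring
  rw [he] at h
  unfold t
  have : 1 / a = 1 / (2 * a) + 1 / (2 * a) := by field_simp; ring
  linarith

lemma lt_t {a : ℝ} (ha : 0 < a) : 1 / (a + 1) - 1 / a < t a := by
  have h1 : (0:ℝ) < a / (a + 1) := by positivity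
  have h2 : a / (a + 1) ≠ 1 := by
    intro h
    rw [div_eq_one_iff_eq (by linarith)] at h
    linarith
  have h := Real.log_lt_sub_one_of_pos h1 h2
  rw [Real.log_div ha.ne' (by linarith)] at h
  have he : a / (a + 1) - 1 = -(1 / (a + 1)) := by field_simp; ring
  rw [he] at h
  unfold t
  linarith

lemma D_nonpos {y : ℝ} (hy : 0 < y) : D y ≤ 0 := by
  have := psi_le_log hy
  unfold D; linarith

lemma neg_le_D {y : ℝ} (hy : 0 < y) : -(1 / y) ≤ D (y + 1) := by
  have h1 := log_le_psi hy
  have h2 : Real.log (y + 1) - Real.log y ≤ 1 / y := by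
    have := Real.log_le_sub_one_of_pos (show (0:ℝ) < (y+1)/y by positivity)
    rw [Real.log_div (by linarith) hy.ne'] at this
    have : Real.log (y + 1) - Real.log y ≤ (y + 1) / y - 1 := this
    have he : (y + 1) / y - 1 = 1 / y := by field_simp; ring
    linarith
  unfold D
  linarith

lemma D_le {y : ℝ} (hy : 0 < y) : D y ≤ -(1 / (2 * y)) := by
  have key : ∀ n : ℕ, D y ≤ 1 / (2 * (y + n)) - 1 / (2 * y) := by
    intro n
    have hsum : ∑ k ∈ Finset.range n, t (y + k) ≤ 1 / (2 * (y + n)) - 1 / (2 * y) := by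
      calc ∑ k ∈ Finset.range n, t (y + k)
          ≤ ∑ k ∈ Finset.range n, (1 / (2 * (y + (k+1:ℕ))) - 1 / (2 * (y + k))) := by
            apply Finset.sum_le_sum
            intro k _
            have hk : (0:ℝ) < y + k := by positivity
            have := t_lt hk
            unfold t at this ⊢
            push_cast at this ⊢
            ring_nf at this ⊢
            linarith
        _ = 1 / (2 * (y + n)) - 1 / (2 * y) := by
            rw [Finset.sum_range_sub (fun k : ℕ => 1 / (2 * (y + k)))]
            norm_num
    have := D_eq y hy n
    have hD := D_nonpos (show (0:ℝ) < y + n by positivity)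
    linarith
  have hlim : Tendsto (fun n : ℕ => 1 / (2 * (y + n)) - 1 / (2 * y)) atTop
      (𝓝 (0 - 1 / (2 * y))) := by
    apply Tendsto.sub_const
    have h1 : Tendsto (fun n : ℕ => 2 * (y + n)) atTop atTop := by
      apply Tendsto.const_mul_atTop two_pos
      exact tendsto_atTop_add_const_left _ _ tendsto_natCast_atTop_atTop
    have h0 : Tendsto (fun n : ℕ => (2 * (y + (n:ℝ)))⁻¹) atTop (𝓝 0) :=
      h1.inv_tendsto_atTop
    simpa [one_div] using h0
  rw [zero_sub] at hlim
  exact ge_of_tendsto hlim (Filter.Eventually.of_forall key)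

lemma le_D {y : ℝ} (hy : 0 < y) : -(1 / y) ≤ D y := by
  have key : ∀ n : ℕ, -(1 / (y + n)) + (1 / (y + n + 1) - 1 / y) ≤ D y := by
    intro n
    have hsum : 1 / (y + n + 1) - 1 / y ≤ ∑ k ∈ Finset.range (n+1), t (y + k) := by
      calc (1 / (y + n + 1) - 1 / y : ℝ)
          = ∑ k ∈ Finset.range (n+1), (1 / (y + (k+1:ℕ)) - 1 / (y + k)) := by
            rw [Finset.sum_range_sub (fun k : ℕ => 1 / (y + k))]
            push_cast
            ring
        _ ≤ ∑ k ∈ Finset.range (n+1), t (y + k) := by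
            apply Finset.sum_le_sum
            intro k _
            have hk : (0:ℝ) < y + k := by positivity
            have := lt_t hk
            unfold t at this ⊢
            push_cast at this ⊢
            ring_nf at this ⊢
            linarith
    have heq := D_eq y hy (n+1)
    have hD : -(1 / (y + n)) ≤ D (y + (n+1:ℕ)) := by
      have := neg_le_D (show (0:ℝ) < y + n by positivity)
      push_cast
      push_cast at this
      convert this using 2
      ring
    push_cast at heq hsum hD ⊢
    linarith
  have hlim : Tendsto (fun n : ℕ => -(1 / (y + n)) + (1 / (y + n + 1) - 1 / y)) atTop
      (𝓝 (-0 + (0 - 1 / y))) := by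
    have h1 : Tendsto (fun n : ℕ => y + (n:ℝ)) atTop atTop :=
      tendsto_atTop_add_const_left _ _ tendsto_natCast_atTop_atTop
    have h2 : Tendsto (fun n : ℕ => y + (n:ℝ) + 1) atTop atTop :=
      tendsto_atTop_add_const_right _ _ h1
    have h1' : Tendsto (fun n : ℕ => (y + (n:ℝ))⁻¹) atTop (𝓝 0) := h1.inv_tendsto_atTop
    have h2' : Tendsto (fun n : ℕ => (y + (n:ℝ) + 1)⁻¹) atTop (𝓝 0) := h2.inv_tendsto_atTop
    apply Tendsto.add
    · simpa [one_div] using h1'.neg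
    · apply Tendsto.sub_const
      simpa [one_div] using h2'
  rw [neg_zero, zero_add, zero_sub] at hlim
  exact le_of_tendsto hlim (Filter.Eventually.of_forall key)

end DigammaAux

theorem digamma_log_bounds (x : ℝ) (hx : 0 < x) :
    Real.log x - 1 / x < psi x ∧ psi x < Real.log x - 1 / (2 * x) := by
  have hx1 : (0:ℝ) < x + 1 := by linarith
  have hstep := DigammaAux.D_step hx
  have hub := DigammaAux.D_le hx1
  have hlb := DigammaAux.le_D hx1
  have htu := DigammaAux.t_lt hx
  have htl := DigammaAux.lt_t hx
  unfold DigammaAux.D at hstep hub hlb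
  unfold DigammaAux.t at hstep htu htl
  constructor
  · linarith
  · linarith
end

section
/- For x > 0, the inequality 1/x + 1/(2x²) < ψ'(x) < 1/x + 1/x² holds, where ψ' is the trigamma function. -/
open Real Filter Topology Finset Set

local notation "γ" => Real.eulerMascheroniConstant

noncomputable def trig (x : ℝ) : ℝ := ∑' n : ℕ, 1 / (x + n) ^ 2

noncomputable def digam (x : ℝ) : ℝ := -γ + ∑' n : ℕ, (1 / ((n : ℝ) + 1) - 1 / (x + n))

noncomputable def F1 (n : ℕ) (x : ℝ) : ℝ := Real.log n - ∑ m ∈ Finset.range (n + 1), 1 / (x + m)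

noncomputable def F2 (n : ℕ) (x : ℝ) : ℝ := ∑ m ∈ Finset.range (n + 1), 1 / (x + m) ^ 2

lemma summable_base : Summable (fun n : ℕ => 1 / ((n : ℝ) + 1) ^ 2) := by
  have := (summable_nat_add_iff 1).2 (Real.summable_one_div_nat_pow.2 (by norm_num : 1 < 2))
  apply this.congr
  intro n; push_cast; ring

lemma inv_xm_le {a x : ℝ} (ha : 0 < a) (hax : a ≤ x) (m : ℕ) :
    1 / (x + m) ≤ (a + 1) / a * (1 / (m + 1)) := by
  have hm : (0:ℝ) ≤ m := m.cast_nonneg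
  have hx : 0 < x := lt_of_lt_of_le ha hax
  rw [div_mul_div_comm, mul_one, div_le_div_iff₀ (by positivity) (by positivity)]
  nlinarith

lemma trig_bound {a x : ℝ} (ha : 0 < a) (hax : a ≤ x) (n : ℕ) :
    ‖1 / (x + n) ^ 2‖ ≤ ((a + 1) / a) ^ 2 * (1 / ((n : ℝ) + 1) ^ 2) := by
  have hm : (0:ℝ) ≤ n := n.cast_nonneg
  have hx : 0 < x + n := by linarith
  rw [Real.norm_eq_abs, abs_of_nonneg (by positivity)]
  have h := inv_xm_le ha hax n
  calc 1 / (x + n) ^ 2 = (1 / (x + n)) ^ 2 := by rw [div_pow, one_pow]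
    _ ≤ ((a + 1) / a * (1 / ((n : ℝ) + 1))) ^ 2 := by
        apply pow_le_pow_left₀ (by positivity) h
    _ = ((a + 1) / a) ^ 2 * (1 / ((n : ℝ) + 1) ^ 2) := by rw [mul_pow]; congr 1; rw [div_pow, one_pow]

lemma a_bound {a b x : ℝ} (ha : 0 < a) (hax : a ≤ x) (hxb : x ≤ b) (n : ℕ) :
    ‖1 / ((n : ℝ) + 1) - 1 / (x + n)‖ ≤ (b + 1) * ((a + 1) / a) * (1 / ((n : ℝ) + 1) ^ 2) := by
  have hm : (0:ℝ) ≤ n := n.cast_nonneg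
  have hx : 0 < x := lt_of_lt_of_le ha hax
  have hxn : 0 < x + n := by linarith
  have hn1 : (0:ℝ) < (n : ℝ) + 1 := by linarith
  have key : 1 / ((n : ℝ) + 1) - 1 / (x + n) = (x - 1) * (1 / ((n : ℝ) + 1) * (1 / (x + n))) := by
    field_simp
    ring
  rw [key, norm_mul, Real.norm_eq_abs, Real.norm_eq_abs, abs_of_nonneg (by positivity : (0:ℝ) ≤ 1 / ((n : ℝ) + 1) * (1 / (x + n)))]
  have h1 : |x - 1| ≤ b + 1 := by
    rw [abs_le]; constructor <;> nlinarith
  have h2 : 1 / ((n : ℝ) + 1) * (1 / (x + n)) ≤ (a + 1) / a * (1 / ((n : ℝ) + 1) ^ 2) := by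
    have := inv_xm_le ha hax n
    calc 1 / ((n : ℝ) + 1) * (1 / (x + n)) ≤ 1 / ((n : ℝ) + 1) * ((a + 1) / a * (1 / ((n:ℝ) + 1))) := by
          gcongr
      _ = (a + 1) / a * (1 / ((n : ℝ) + 1) ^ 2) := by
          rw [mul_comm, mul_assoc, div_mul_div_comm, one_mul, ← pow_two]
  calc |x - 1| * (1 / ((n : ℝ) + 1) * (1 / (x + n)))
      ≤ (b + 1) * ((a + 1) / a * (1 / ((n : ℝ) + 1) ^ 2)) := by
        apply mul_le_mul h1 h2 (by positivity) (by linarith)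
    _ = (b + 1) * ((a + 1) / a) * (1 / ((n : ℝ) + 1) ^ 2) := by ring

lemma summable_trig {x : ℝ} (hx : 0 < x) : Summable (fun n : ℕ => 1 / (x + n) ^ 2) := by
  apply Summable.of_norm
  apply Summable.of_nonneg_of_le (fun n => norm_nonneg _) (fun n => trig_bound hx le_rfl n)
  exact summable_base.mul_left _

lemma summable_a {x : ℝ} (hx : 0 < x) :
    Summable (fun n : ℕ => 1 / ((n : ℝ) + 1) - 1 / (x + n)) := by
  apply Summable.of_norm
  apply Summable.of_nonneg_of_le (fun n => norm_nonneg _) (fun n => a_bound hx le_rfl le_rfl n)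
  exact summable_base.mul_left _

lemma F1_split {x : ℝ} (n : ℕ) :
    F1 n x = (Real.log n - ∑ m ∈ Finset.range (n + 1), 1 / ((m : ℝ) + 1))
      + ∑ m ∈ Finset.range (n + 1), (1 / ((m : ℝ) + 1) - 1 / (x + m)) := by
  rw [F1, Finset.sum_sub_distrib]
  ring

lemma harm_cast (n : ℕ) : ((harmonic n : ℚ) : ℝ) = ∑ m ∈ Finset.range n, 1 / ((m : ℝ) + 1) := by
  rw [harmonic]
  push_cast
  simp [one_div]

lemma tendsto_c :
    Tendsto (fun n : ℕ => Real.log n - ∑ m ∈ Finset.range (n + 1), 1 / ((m : ℝ) + 1)) atTop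
      (𝓝 (-γ)) := by
  have h1 : Tendsto (fun n : ℕ => ((harmonic (n + 1) : ℚ) : ℝ) - Real.log (n + 1)) atTop (𝓝 γ) := by
    have := Real.tendsto_harmonic_sub_log.comp (tendsto_add_atTop_nat 1)
    apply this.congr
    intro n
    simp only [Function.comp_apply]
    push_cast
    ring_nf
  have h2 := Real.tendsto_log_nat_add_one_sub_log
  have := (h1.add h2).neg
  rw [show -(γ + 0) = -γ by ring] at this
  apply this.congr
  intro n
  rw [harm_cast]
  push_cast
  ring

lemma tendsto_F1 {x : ℝ} (hx : 0 < x) :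
    Tendsto (fun n => F1 n x) atTop (𝓝 (digam x)) := by
  simp_rw [F1_split]
  apply Tendsto.add tendsto_c
  exact ((summable_a hx).hasSum.tendsto_sum_nat).comp (tendsto_add_atTop_nat 1)

lemma shift_TU {f : ℕ → ℝ → ℝ} {g : ℝ → ℝ} {s : Set ℝ}
    (h : TendstoUniformlyOn f g atTop s) : TendstoUniformlyOn (fun n => f (n + 1)) g atTop s := by
  rw [Metric.tendstoUniformlyOn_iff] at h ⊢
  intro ε hε
  obtain ⟨N, hN⟩ := eventually_atTop.1 (h ε hε)
  exact eventually_atTop.2 ⟨N, fun n hn => hN (n + 1) (by omega)⟩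

lemma isCompact_bounds {K : Set ℝ} (hK : K ⊆ Set.Ioi 0) (hKc : IsCompact K) (hne : K.Nonempty) :
    ∃ a b : ℝ, 0 < a ∧ a ≤ b ∧ K ⊆ Set.Icc a b := by
  obtain ⟨a, haK, ha⟩ := hKc.exists_isLeast hne
  obtain ⟨b, hbK, hb⟩ := hKc.exists_isGreatest hne
  exact ⟨a, b, hK haK, ha hbK, fun y hy => ⟨ha hy, hb hy⟩⟩

lemma TLU_F1 : TendstoLocallyUniformlyOn F1 digam atTop (Set.Ioi 0) := by
  rw [tendstoLocallyUniformlyOn_iff_forall_isCompact isOpen_Ioi]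
  intro K hK hKc
  rcases K.eq_empty_or_nonempty with rfl | hne
  · exact tendstoUniformlyOn_empty
  obtain ⟨a, b, ha, hab, hKab⟩ := isCompact_bounds hK hKc hne
  apply TendstoUniformlyOn.mono _ hKab
  have hU : TendstoUniformlyOn
      (fun N x => ∑ m ∈ Finset.range N, (1 / ((m : ℝ) + 1) - 1 / (x + m)))
      (fun x => ∑' m : ℕ, (1 / ((m : ℝ) + 1) - 1 / (x + m))) atTop (Set.Icc a b) := by
    apply tendstoUniformlyOn_tsum_nat (summable_base.mul_left ((b + 1) * ((a + 1) / a)))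
    intro m x hxm
    exact a_bound ha hxm.1 hxm.2 m
  have hC : TendstoUniformlyOn
      (fun n : ℕ => fun _ : ℝ => Real.log n - ∑ m ∈ Finset.range (n + 1), 1 / ((m : ℝ) + 1))
      (fun _ => -γ) atTop (Set.Icc a b) := tendsto_c.tendstoUniformlyOn_const _
  have h2 := hC.add (shift_TU hU)
  have h3 := h2.congr (F' := F1) (Filter.Eventually.of_forall fun n x _ => (F1_split n).symm)
  exact h3.congr_right fun x _ => rfl

lemma TLU_F2 : TendstoLocallyUniformlyOn F2 trig atTop (Set.Ioi 0) := by
  rw [tendstoLocallyUniformlyOn_iff_forall_isCompact isOpen_Ioi]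
  intro K hK hKc
  rcases K.eq_empty_or_nonempty with rfl | hne
  · exact tendstoUniformlyOn_empty
  obtain ⟨a, b, ha, hab, hKab⟩ := isCompact_bounds hK hKc hne
  apply TendstoUniformlyOn.mono _ hKab
  have hU : TendstoUniformlyOn
      (fun N (x : ℝ) => ∑ m ∈ Finset.range N, 1 / (x + m) ^ 2)
      (fun x : ℝ => ∑' m : ℕ, 1 / (x + m) ^ 2) atTop (Set.Icc a b) := by
    apply tendstoUniformlyOn_tsum_nat (summable_base.mul_left (((a + 1) / a) ^ 2))
    intro m x hxm
    exact trig_bound ha hxm.1 m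
  exact shift_TU hU

lemma hasDerivAt_lgs {x : ℝ} (hx : 0 < x) (n : ℕ) :
    HasDerivAt (fun y => Real.BohrMollerup.logGammaSeq y n) (F1 n x) x := by
  have h1 : HasDerivAt (fun y : ℝ => y * Real.log n + Real.log (n.factorial)) (Real.log n) x := by
    simpa using ((hasDerivAt_id x).mul_const (Real.log n)).add_const (Real.log (n.factorial))
  have h2 : HasDerivAt (fun y : ℝ => ∑ m ∈ Finset.range (n + 1), Real.log (y + m))
      (∑ m ∈ Finset.range (n + 1), 1 / (x + m)) x := by
    apply HasDerivAt.fun_sum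
    intro m _
    have hm : (0:ℝ) ≤ m := m.cast_nonneg
    have hne : x + m ≠ 0 := by positivity
    simpa using ((hasDerivAt_id x).add_const (m : ℝ)).log hne
  exact h1.sub h2

lemma hasDerivAt_F1 {x : ℝ} (hx : 0 < x) (n : ℕ) :
    HasDerivAt (F1 n) (F2 n x) x := by
  have h2 : HasDerivAt (fun y : ℝ => ∑ m ∈ Finset.range (n + 1), 1 / (y + m))
      (∑ m ∈ Finset.range (n + 1), -(1 / (x + m) ^ 2)) x := by
    apply HasDerivAt.fun_sum
    intro m _
    have hm : (0:ℝ) ≤ m := m.cast_nonneg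
    have hne : x + m ≠ 0 := by positivity
    have := ((hasDerivAt_id x).add_const (m : ℝ)).inv hne
    simpa [one_div, neg_div, Pi.inv_def] using this
  have h := (hasDerivAt_const x (Real.log n)).sub h2
  simp only [zero_sub, Finset.sum_neg_distrib, neg_neg] at h
  exact h

lemma hasDerivAt_logGamma {x : ℝ} (hx : 0 < x) :
    HasDerivAt (fun y => Real.log (Real.Gamma y)) (digam x) x := by
  apply hasDerivAt_of_tendstoLocallyUniformlyOn isOpen_Ioi TLU_F1
    (Filter.Eventually.of_forall fun n y hy => hasDerivAt_lgs hy n)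
    (fun y hy => Real.BohrMollerup.tendsto_log_gamma hy) hx

lemma hasDerivAt_digam {x : ℝ} (hx : 0 < x) :
    HasDerivAt digam (trig x) x := by
  apply hasDerivAt_of_tendstoLocallyUniformlyOn isOpen_Ioi TLU_F2
    (Filter.Eventually.of_forall fun n y hy => hasDerivAt_F1 hy n)
    (fun y hy => tendsto_F1 hy) hx

lemma hasSum_telescope {g : ℕ → ℝ} (h0 : Tendsto g atTop (𝓝 0))
    (hmono : ∀ n, g (n + 1) ≤ g n) : HasSum (fun n => g n - g (n + 1)) (g 0) := by
  rw [hasSum_iff_tendsto_nat_of_nonneg (fun n => sub_nonneg.2 (hmono n))]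
  simp_rw [Finset.sum_range_sub' g]
  simpa using tendsto_const_nhds.sub h0

lemma tendsto_inv_x_add_n {x : ℝ} (hx : 0 < x) :
    Tendsto (fun n : ℕ => 1 / (x + n)) atTop (𝓝 0) := by
  simp_rw [one_div]
  apply Tendsto.inv_tendsto_atTop
  apply tendsto_atTop_add_const_left
  exact tendsto_natCast_atTop_atTop

lemma trig_lt_upper {x : ℝ} (hx : 0 < x) : trig x < 1 / x + 1 / x ^ 2 := by
  have hs := summable_trig hx
  have hshift : Summable (fun n : ℕ => 1 / (x + ((n : ℝ) + 1)) ^ 2) := by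
    have := (summable_nat_add_iff 1).2 hs
    apply this.congr
    intro n; push_cast; ring_nf
  have hpos : ∀ n : ℕ, (0:ℝ) < x + n := by
    intro n; have := n.cast_nonneg (α := ℝ); linarith
  have htel : HasSum (fun n : ℕ => 1 / (x + n) - 1 / (x + ((n : ℝ) + 1))) (1 / x) := by
    have h := hasSum_telescope (g := fun n : ℕ => 1 / (x + n)) (tendsto_inv_x_add_n hx) ?_
    · simp only [Nat.cast_zero, add_zero] at h
      have he : (fun n : ℕ => 1 / (x + n) - 1 / (x + ((n : ℝ) + 1)))
          = fun n : ℕ => 1 / (x + n) - 1 / (x + ((n + 1 : ℕ) : ℝ)) := by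
        funext n; push_cast; ring_nf
      rw [he]; exact h
    · intro n
      apply one_div_le_one_div_of_le (hpos n)
      push_cast; linarith
  have hterm : ∀ n : ℕ, 1 / (x + ((n : ℝ) + 1)) ^ 2 ≤ 1 / (x + n) - 1 / (x + ((n : ℝ) + 1)) := by
    intro n
    have h1 := hpos n
    have h2 : (0:ℝ) < x + ((n : ℝ) + 1) := by linarith
    have key : 1 / (x + n) - 1 / (x + ((n : ℝ) + 1)) = 1 / ((x + n) * (x + ((n : ℝ) + 1))) := by
      field_simp
      try ring
    rw [key]
    apply one_div_le_one_div_of_le (by positivity)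
    nlinarith
  have hterm0 : 1 / (x + (((0:ℕ) : ℝ) + 1)) ^ 2 < 1 / (x + ((0:ℕ):ℝ)) - 1 / (x + (((0:ℕ) : ℝ) + 1)) := by
    have h1 := hpos 0
    have h2 : (0:ℝ) < x + (((0:ℕ) : ℝ) + 1) := by linarith
    have key : 1 / (x + ((0:ℕ):ℝ)) - 1 / (x + (((0:ℕ) : ℝ) + 1)) = 1 / ((x + ((0:ℕ):ℝ)) * (x + (((0:ℕ):ℝ) + 1))) := by
      field_simp
      try ring
    rw [key]
    apply one_div_lt_one_div_of_lt (by positivity)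
    nlinarith
  have hlt : ∑' n : ℕ, 1 / (x + ((n : ℝ) + 1)) ^ 2 < 1 / x := by
    rw [← htel.tsum_eq]
    exact Summable.tsum_lt_tsum hterm hterm0 hshift htel.summable
  have hsplit : trig x = 1 / (x + ((0:ℕ):ℝ)) ^ 2 + ∑' n : ℕ, 1 / (x + ((n : ℝ) + 1)) ^ 2 := by
    rw [trig, Summable.tsum_eq_zero_add hs]
    congr 1
    apply tsum_congr
    intro n; push_cast; ring_nf
  rw [hsplit]
  have : 1 / (x + ((0:ℕ):ℝ)) ^ 2 = 1 / x ^ 2 := by norm_num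
  rw [this]
  linarith

lemma lower_lt_trig {x : ℝ} (hx : 0 < x) : 1 / x + 1 / (2 * x ^ 2) < trig x := by
  have hs := summable_trig hx
  have hpos : ∀ n : ℕ, (0:ℝ) < x + n := by
    intro n; have := n.cast_nonneg (α := ℝ); linarith
  set G : ℕ → ℝ := fun n => 1 / (x + n) + 1 / (x + n) ^ 2 / 2 with hG
  have hGpos : ∀ n, 0 < G n := fun n => by have := hpos n; positivity
  have hGmono : ∀ n : ℕ, G (n + 1) ≤ G n := by
    intro n
    have h1 := hpos n
    have h2 : x + (n:ℝ) ≤ x + ((n + 1 : ℕ) : ℝ) := by push_cast; linarith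
    have e1 : 1 / (x + ((n+1:ℕ):ℝ)) ≤ 1 / (x + n) := one_div_le_one_div_of_le h1 h2
    have e2 : 1 / (x + ((n+1:ℕ):ℝ)) ^ 2 ≤ 1 / (x + n) ^ 2 := by
      apply one_div_le_one_div_of_le (by positivity)
      nlinarith
    simp only [hG]
    linarith
  have hG0 : Tendsto G atTop (𝓝 0) := by
    have h1 := tendsto_inv_x_add_n hx
    have h2 : Tendsto (fun n : ℕ => 1 / (x + n) ^ 2 / 2) atTop (𝓝 0) := by
      have := (h1.mul h1).div_const 2
      simp only [mul_zero, zero_div] at this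
      apply this.congr
      intro n; field_simp
    simpa only [add_zero] using h1.add h2
  have htel : HasSum (fun n => G n - G (n + 1)) (G 0) := hasSum_telescope hG0 hGmono
  have hterm : ∀ n : ℕ, G n - G (n + 1) < 1 / (x + n) ^ 2 := by
    intro n
    have h1 := hpos n
    have h2 : (0:ℝ) < x + ((n+1:ℕ):ℝ) := hpos (n+1)
    set u := 1 / (x + (n:ℝ)) with hu
    set v := 1 / (x + ((n+1:ℕ):ℝ)) with hv
    have huv : u - v = u * v := by
      rw [hu, hv]
      field_simp
      try push_cast
      try ring
    have hvu : v < u := by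
      apply one_div_lt_one_div_of_lt h1
      push_cast; linarith
    have hne : u ≠ v := ne_of_gt hvu
    have hsq : 0 < (u - v) ^ 2 := pow_pos (sub_pos.2 hvu) 2
    have goal1 : u * v + (u ^ 2 - v ^ 2) / 2 < u ^ 2 := by nlinarith
    have hGn : G n - G (n + 1) = (u - v) + (u ^ 2 - v ^ 2) / 2 := by
      simp only [hG, hu, hv]
      push_cast
      rw [div_pow, div_pow]
      ring
    rw [hGn, huv]
    have : 1 / (x + (n:ℝ)) ^ 2 = u ^ 2 := by rw [hu, div_pow, one_pow]
    rw [this]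
    linarith
  have hsumm : Summable (fun n => G n - G (n + 1)) := htel.summable
  have hlt : ∑' n, (G n - G (n + 1)) < trig x := by
    apply Summable.tsum_lt_tsum (fun n => (hterm n).le) (hterm 0) hsumm hs
  rw [htel.tsum_eq] at hlt
  have hG0eq : G 0 = 1 / x + 1 / (2 * x ^ 2) := by
    simp only [hG, Nat.cast_zero, add_zero]
    field_simp
  rwa [hG0eq] at hlt

lemma deriv_psi_eq {x : ℝ} (hx : 0 < x) : deriv psi x = trig x := by
  have h1 : Set.EqOn psi digam (Set.Ioi 0) := fun y hy => (hasDerivAt_logGamma hy).deriv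
  have h2 : psi =ᶠ[𝓝 x] digam :=
    Filter.eventuallyEq_of_mem (isOpen_Ioi.mem_nhds hx) h1
  rw [h2.deriv_eq, (hasDerivAt_digam hx).deriv]

theorem trigamma_bounds (x : ℝ) (hx : 0 < x) :
    1 / x + 1 / (2 * x ^ 2) < deriv psi x ∧ deriv psi x < 1 / x + 1 / x ^ 2 := by
  rw [deriv_psi_eq hx]
  exact ⟨lower_lt_trig hx, trig_lt_upper hx⟩
end

section
/- Let 0 ≤ α < β with β - α > 1. Then the function q_{α,β}(u) = (e^{-αu} - e^{-βu})/(1 - e^{-u}) for u ≠ 0, with q_{α,β}(0) = β - α, is logarithmically convex on all of ℝ, i.e., ln q_{α,β} is convex. -/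
open Real Set Filter Topology

noncomputable def q (α β u : ℝ) : ℝ :=
  if u = 0 then β - α else (Real.exp (-α * u) - Real.exp (-β * u)) / (1 - Real.exp (-u))

/-- superlinearity of sinh -/
lemma sinh_superlin {c x : ℝ} (hc : 1 ≤ c) (hx : 0 ≤ x) :
    c * Real.sinh x ≤ Real.sinh (c * x) := by
  set f : ℝ → ℝ := fun y => Real.sinh (c * y) - c * Real.sinh y with hf
  have hder : ∀ y : ℝ, HasDerivAt f (c * Real.cosh (c * y) - c * Real.cosh y) y := by
    intro y
    have hcy : HasDerivAt (fun y : ℝ => c * y) c y := by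
      simpa using (hasDerivAt_id y).const_mul c
    have h1 : HasDerivAt (fun y : ℝ => Real.sinh (c * y)) (Real.cosh (c * y) * c) y :=
      (Real.hasDerivAt_sinh (c * y)).comp y hcy
    have h2 : HasDerivAt (fun y : ℝ => c * Real.sinh y) (c * Real.cosh y) y :=
      (Real.hasDerivAt_sinh y).const_mul c
    exact HasDerivAt.congr_deriv (h1.sub h2) (by ring)
  have hmono : MonotoneOn f (Ici (0:ℝ)) := by
    apply monotoneOn_of_deriv_nonneg (convex_Ici 0)
    · exact (Continuous.continuousOn (by continuity))
    · intro y hy; exact (hder y).differentiableAt.differentiableWithinAt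
    · intro y hy
      rw [(hder y).deriv]
      have hy0 : 0 < y := by simpa using hy
      have : Real.cosh y ≤ Real.cosh (c * y) := by
        rw [Real.cosh_le_cosh]
        rw [abs_of_nonneg hy0.le, abs_of_nonneg (by nlinarith)]
        nlinarith
      nlinarith [this]
  have h0 : f 0 ≤ f x := hmono (by simp) (by simpa using hx) hx
  simp only [hf, mul_zero, Real.sinh_zero] at h0
  linarith

noncomputable def qR (γ u : ℝ) : ℝ :=
  if u = 0 then γ else Real.sinh (γ * u / 2) / Real.sinh (u / 2)

noncomputable def qL (γ : ℝ) : ℝ → ℝ := fun u => Real.log (qR γ u)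

noncomputable def qG (γ : ℝ) : ℝ → ℝ :=
  fun u => Real.log (Real.sinh (γ * u / 2)) - Real.log (Real.sinh (u / 2))

noncomputable def qG' (γ : ℝ) : ℝ → ℝ :=
  fun u => γ / 2 * (Real.cosh (γ * u / 2) / Real.sinh (γ * u / 2))
    - 1 / 2 * (Real.cosh (u / 2) / Real.sinh (u / 2))

noncomputable def qG'' (γ : ℝ) : ℝ → ℝ :=
  fun u => 1 / (4 * Real.sinh (u / 2) ^ 2) - γ ^ 2 / (4 * Real.sinh (γ * u / 2) ^ 2)

section core
variable {γ : ℝ}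

lemma half_hasDerivAt (a x : ℝ) : HasDerivAt (fun u : ℝ => a * u / 2) (a / 2) x := by
  simpa using ((hasDerivAt_id x).const_mul a).div_const 2

lemma qL_eq_qG (hγ : 0 < γ) {u : ℝ} (hu : 0 < u) : qL γ u = qG γ u := by
  have h1 : Real.sinh (γ * u / 2) ≠ 0 := by
    apply Real.sinh_ne_zero.2; positivity
  have h2 : Real.sinh (u / 2) ≠ 0 := by
    apply Real.sinh_ne_zero.2; positivity
  unfold qL qR qG
  rw [if_neg (ne_of_gt hu), Real.log_div h1 h2]

lemma qG_hasDeriv (hγ : 0 < γ) {x : ℝ} (hx : 0 < x) :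
    HasDerivAt (qG γ) (qG' γ x) x := by
  have hS : (0:ℝ) < Real.sinh (γ * x / 2) := Real.sinh_pos_iff.2 (by positivity)
  have hs : (0:ℝ) < Real.sinh (x / 2) := Real.sinh_pos_iff.2 (by positivity)
  have d1 : HasDerivAt (fun u : ℝ => Real.sinh (γ * u / 2)) (Real.cosh (γ * x / 2) * (γ / 2)) x :=
    (Real.hasDerivAt_sinh _).comp x (half_hasDerivAt γ x)
  have d2 : HasDerivAt (fun u : ℝ => Real.sinh (u / 2)) (Real.cosh (x / 2) * (1 / 2)) x := by
    simpa [Function.comp_def] using (Real.hasDerivAt_sinh _).comp x (half_hasDerivAt 1 x)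
  have l1 := d1.log (ne_of_gt hS)
  have l2 := d2.log (ne_of_gt hs)
  have := l1.sub l2
  refine this.congr_deriv ?_
  unfold qG'
  field_simp

lemma qG'_hasDeriv (hγ : 0 < γ) {x : ℝ} (hx : 0 < x) :
    HasDerivAt (qG' γ) (qG'' γ x) x := by
  have hS : (0:ℝ) < Real.sinh (γ * x / 2) := Real.sinh_pos_iff.2 (by positivity)
  have hs : (0:ℝ) < Real.sinh (x / 2) := Real.sinh_pos_iff.2 (by positivity)
  have dS : HasDerivAt (fun u : ℝ => Real.sinh (γ * u / 2)) (Real.cosh (γ * x / 2) * (γ / 2)) x :=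
    (Real.hasDerivAt_sinh _).comp x (half_hasDerivAt γ x)
  have dC : HasDerivAt (fun u : ℝ => Real.cosh (γ * u / 2)) (Real.sinh (γ * x / 2) * (γ / 2)) x :=
    (Real.hasDerivAt_cosh _).comp x (half_hasDerivAt γ x)
  have ds : HasDerivAt (fun u : ℝ => Real.sinh (u / 2)) (Real.cosh (x / 2) * (1 / 2)) x := by
    simpa [Function.comp_def] using (Real.hasDerivAt_sinh _).comp x (half_hasDerivAt 1 x)
  have dc : HasDerivAt (fun u : ℝ => Real.cosh (u / 2)) (Real.sinh (x / 2) * (1 / 2)) x := by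
    simpa [Function.comp_def] using (Real.hasDerivAt_cosh _).comp x (half_hasDerivAt 1 x)
  have q1 := (dC.div dS (ne_of_gt hS)).const_mul (γ / 2)
  have q2 := (dc.div ds (ne_of_gt hs)).const_mul (1 / 2 : ℝ)
  have := q1.sub q2
  refine this.congr_deriv ?_
  have hc1 : Real.cosh (γ * x / 2) ^ 2 = 1 + Real.sinh (γ * x / 2) ^ 2 := Real.cosh_sq' _
  have hc2 : Real.cosh (x / 2) ^ 2 = 1 + Real.sinh (x / 2) ^ 2 := Real.cosh_sq' _
  have h1 : Real.sinh (γ * x / 2) * (γ / 2) * Real.sinh (γ * x / 2)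
      - Real.cosh (γ * x / 2) * (Real.cosh (γ * x / 2) * (γ / 2)) = -(γ / 2) := by
    linear_combination (-(γ / 2)) * hc1
  have h2 : Real.sinh (x / 2) * (1 / 2) * Real.sinh (x / 2)
      - Real.cosh (x / 2) * (Real.cosh (x / 2) * (1 / 2)) = -(1 / 2 : ℝ) := by
    linear_combination (-(1 / 2 : ℝ)) * hc2
  rw [h1, h2]
  unfold qG''
  field_simp
  ring

lemma qR_pos (hγ : 0 < γ) (u : ℝ) : 0 < qR γ u := by
  unfold qR
  rcases eq_or_ne u 0 with h | h
  · simp [h, hγ]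
  · simp only [h, if_false]
    rcases lt_or_gt_of_ne h with hu | hu
    · apply div_pos_of_neg_of_neg
      · apply Real.sinh_neg_iff.2; nlinarith
      · apply Real.sinh_neg_iff.2; nlinarith
    · apply div_pos
      · apply Real.sinh_pos_iff.2; positivity
      · apply Real.sinh_pos_iff.2; positivity

lemma qR_even (γ u : ℝ) : qR γ (-u) = qR γ u := by
  unfold qR
  rcases eq_or_ne u 0 with h | h
  · simp [h]
  · simp only [h, neg_eq_zero, if_false]
    rw [show γ * -u / 2 = -(γ * u / 2) by ring, show -u / 2 = -(u / 2) by ring,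
      Real.sinh_neg, Real.sinh_neg, neg_div_neg_eq]

lemma qL_hasDeriv (hγ : 0 < γ) {x : ℝ} (hx : 0 < x) :
    HasDerivAt (qL γ) (qG' γ x) x := by
  apply (qG_hasDeriv hγ hx).congr_of_eventuallyEq
  filter_upwards [isOpen_Ioi.mem_nhds hx] with u hu
  exact qL_eq_qG hγ hu

lemma tendsto_qR (hγ : 0 < γ) : Tendsto (qR γ) (𝓝[≠] (0:ℝ)) (𝓝 γ) := by
  have hslope : Tendsto (fun x : ℝ => Real.sinh x / x) (𝓝[≠] 0) (𝓝 1) := by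
    have h := Real.hasDerivAt_sinh 0
    rw [hasDerivAt_iff_tendsto_slope] at h
    have h' : Tendsto (fun b : ℝ => b⁻¹ * Real.sinh b) (𝓝[≠] 0) (𝓝 1) := by
      simpa [slope_fun_def, Real.sinh_zero, Real.cosh_zero] using h
    exact h'.congr fun b => (div_eq_inv_mul _ _).symm
  have hmap : ∀ a : ℝ, a ≠ 0 → Tendsto (fun u : ℝ => a * u / 2) (𝓝[≠] (0:ℝ)) (𝓝[≠] (0:ℝ)) := by
    intro a ha
    rw [tendsto_nhdsWithin_iff]
    constructor
    · have : Tendsto (fun u : ℝ => a * u / 2) (𝓝 0) (𝓝 (a * 0 / 2)) :=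
        ((continuous_const.mul continuous_id).div_const 2).tendsto 0
      simp only [mul_zero, zero_div] at this
      exact this.mono_left nhdsWithin_le_nhds
    · filter_upwards [eventually_mem_nhdsWithin] with u hu
      simp only [mem_compl_iff, mem_singleton_iff] at hu ⊢
      intro hcon
      rcases mul_eq_zero.1 (by linarith [hcon] : a * u = 0) with h | h
      · exact ha h
      · exact hu h
  have h1 : Tendsto (fun u : ℝ => Real.sinh (γ * u / 2) / (γ * u / 2)) (𝓝[≠] 0) (𝓝 1) :=
    hslope.comp (hmap γ (ne_of_gt hγ))
  have h2 : Tendsto (fun u : ℝ => Real.sinh (u / 2) / (u / 2)) (𝓝[≠] 0) (𝓝 1) := by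
    have := hslope.comp (hmap 1 one_ne_zero)
    simpa [Function.comp_def] using this
  have h3 : Tendsto (fun u : ℝ =>
      (Real.sinh (γ * u / 2) / (γ * u / 2)) / (Real.sinh (u / 2) / (u / 2)) * γ)
      (𝓝[≠] 0) (𝓝 (1 / 1 * γ)) := (h1.div h2 one_ne_zero).mul_const γ
  norm_num at h3
  apply h3.congr'
  filter_upwards [eventually_mem_nhdsWithin] with u hu
  simp only [mem_compl_iff, mem_singleton_iff] at hu
  have hs : Real.sinh (u / 2) ≠ 0 := Real.sinh_ne_zero.2 (by simpa using hu)
  unfold qR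
  rw [if_neg hu]
  field_simp

lemma qL_contAt_zero (hγ : 0 < γ) : ContinuousAt (qL γ) 0 := by
  have hR : ContinuousAt (qR γ) 0 := by
    rw [ContinuousAt, show qR γ 0 = γ by simp [qR],
      ← nhdsNE_sup_pure (0:ℝ), tendsto_sup]
    refine ⟨tendsto_qR hγ, ?_⟩
    have := tendsto_pure_nhds (qR γ) 0
    simpa [show qR γ 0 = γ by simp [qR]] using this
  exact (Real.continuousAt_log (ne_of_gt (qR_pos hγ 0))).comp hR

lemma qL_contOn (hγ : 0 < γ) : ContinuousOn (qL γ) (Ici 0) := by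
  intro x hx
  rcases eq_or_lt_of_le (mem_Ici.1 hx) with h | h
  · exact ((h ▸ qL_contAt_zero hγ)).continuousWithinAt
  · exact (qL_hasDeriv hγ h).continuousAt.continuousWithinAt

lemma qG'_nonneg (hγ : 1 < γ) {x : ℝ} (hx : 0 < x) : 0 ≤ qG' γ x := by
  have hγ0 : (0:ℝ) < γ := by linarith
  have hy0 : 0 < x / 2 := by positivity
  set y := x / 2 with hy
  have hS : (0:ℝ) < Real.sinh (γ * y) := Real.sinh_pos_iff.2 (by positivity)
  have hs : (0:ℝ) < Real.sinh y := Real.sinh_pos_iff.2 hy0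
  have hne : γ - 1 ≠ 0 := by intro h; rw [sub_eq_zero] at h; exact (ne_of_gt hγ) h
  have hsl := sinh_superlin (c := (γ + 1) / (γ - 1)) (x := (γ - 1) * y)
    (by rw [le_div_iff₀ (by linarith)]; linarith)
    (by nlinarith)
  have harg : (γ + 1) / (γ - 1) * ((γ - 1) * y) = (γ + 1) * y := by
    field_simp
  rw [harg] at hsl
  -- multiply by (γ - 1) > 0
  have hkey : (γ + 1) * Real.sinh ((γ - 1) * y) ≤ (γ - 1) * Real.sinh ((γ + 1) * y) := by
    have h := mul_le_mul_of_nonneg_left hsl (by linarith : (0:ℝ) ≤ γ - 1)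
    have hcan : (γ - 1) * ((γ + 1) / (γ - 1)) = γ + 1 := by
      rw [mul_comm, div_mul_cancel₀ _ hne]
    calc (γ + 1) * Real.sinh ((γ - 1) * y)
        = (γ - 1) * ((γ + 1) / (γ - 1) * Real.sinh ((γ - 1) * y)) := by
          rw [← mul_assoc, hcan]
      _ ≤ (γ - 1) * Real.sinh ((γ + 1) * y) := h
  rw [show (γ + 1) * y = γ * y + y by ring, show (γ - 1) * y = γ * y - y by ring,
    Real.sinh_add, Real.sinh_sub] at hkey
  have hprod : Real.cosh y * Real.sinh (γ * y) ≤ γ * (Real.cosh (γ * y) * Real.sinh y) := by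
    nlinarith [hkey]
  have hdiv : Real.cosh y / Real.sinh y ≤ γ * Real.cosh (γ * y) / Real.sinh (γ * y) := by
    rw [div_le_div_iff₀ hs hS]
    nlinarith [hprod]
  unfold qG'
  have e1 : γ * x / 2 = γ * y := by rw [hy]; ring
  rw [e1, show x / 2 = y from rfl]
  have h5 : γ / 2 * (Real.cosh (γ * y) / Real.sinh (γ * y))
      = γ * Real.cosh (γ * y) / Real.sinh (γ * y) / 2 := by ring
  have h6 : 1 / 2 * (Real.cosh y / Real.sinh y) = Real.cosh y / Real.sinh y / 2 := by ring
  rw [h5, h6]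
  linarith [hdiv]

lemma qG''_nonneg (hγ : 1 < γ) {x : ℝ} (hx : 0 < x) : 0 ≤ qG'' γ x := by
  have hγ0 : (0:ℝ) < γ := by linarith
  have hy0 : 0 < x / 2 := by positivity
  have hS : (0:ℝ) < Real.sinh (γ * x / 2) := Real.sinh_pos_iff.2 (by positivity)
  have hs : (0:ℝ) < Real.sinh (x / 2) := Real.sinh_pos_iff.2 hy0
  have hsl := sinh_superlin (c := γ) (x := x / 2) hγ.le hy0.le
  have harg : γ * (x / 2) = γ * x / 2 := by ring
  rw [harg] at hsl
  have hsq : γ ^ 2 * Real.sinh (x / 2) ^ 2 ≤ Real.sinh (γ * x / 2) ^ 2 := by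
    have h := mul_le_mul hsl hsl (by positivity) hS.le
    nlinarith [h]
  unfold qG''
  have : γ ^ 2 / (4 * Real.sinh (γ * x / 2) ^ 2) ≤ 1 / (4 * Real.sinh (x / 2) ^ 2) := by
    rw [div_le_div_iff₀ (by positivity) (by positivity)]
    nlinarith [hsq]
  linarith

lemma qL_convexOn_Ici (hγ : 1 < γ) : ConvexOn ℝ (Ici 0) (qL γ) := by
  have hγ0 : (0:ℝ) < γ := by linarith
  apply convexOn_of_hasDerivWithinAt2_nonneg (convex_Ici 0) (qL_contOn hγ0)
    (f' := qG' γ) (f'' := qG'' γ)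
  · intro x hx
    rw [interior_Ici] at hx ⊢
    exact ((qL_hasDeriv hγ0 hx).hasDerivWithinAt)
  · intro x hx
    rw [interior_Ici] at hx ⊢
    exact ((qG'_hasDeriv hγ0 hx).hasDerivWithinAt)
  · intro x hx
    rw [interior_Ici] at hx
    exact qG''_nonneg hγ hx

lemma qL_monotoneOn (hγ : 1 < γ) : MonotoneOn (qL γ) (Ici 0) := by
  have hγ0 : (0:ℝ) < γ := by linarith
  apply monotoneOn_of_deriv_nonneg (convex_Ici 0) (qL_contOn hγ0)
  · intro x hx
    rw [interior_Ici] at hx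
    exact (qL_hasDeriv hγ0 hx).differentiableAt.differentiableWithinAt
  · intro x hx
    rw [interior_Ici] at hx
    rw [(qL_hasDeriv hγ0 hx).deriv]
    exact qG'_nonneg hγ hx

lemma qL_convexOn_univ (hγ : 1 < γ) : ConvexOn ℝ univ (qL γ) := by
  have hγ0 : (0:ℝ) < γ := by linarith
  have himg : (fun u : ℝ => |u|) '' univ = Ici 0 := by
    rw [image_univ]
    ext x
    simp only [mem_range, mem_Ici]
    constructor
    · rintro ⟨y, rfl⟩; exact abs_nonneg y
    · intro hx; exact ⟨x, abs_of_nonneg hx⟩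
  have habs : ConvexOn ℝ (univ : Set ℝ) (fun u : ℝ => |u|) := by
    exact (convexOn_univ_norm : ConvexOn ℝ univ (norm : ℝ → ℝ)).congr (fun u _ => Real.norm_eq_abs u)
  have hcomp : ConvexOn ℝ (univ : Set ℝ) (qL γ ∘ fun u : ℝ => |u|) :=
    ConvexOn.comp (himg ▸ qL_convexOn_Ici hγ) habs (himg ▸ qL_monotoneOn hγ)
  have : (qL γ ∘ fun u : ℝ => |u|) = qL γ := by
    funext u
    simp only [Function.comp_apply]
    rcases le_or_gt 0 u with h | h
    · rw [abs_of_nonneg h]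
    · rw [abs_of_neg h]
      unfold qL
      rw [qR_even]
  rwa [this] at hcomp

end core

lemma exp_sub_exp_half (u : ℝ) :
    Real.exp (u / 2) - Real.exp (-(u / 2)) = Real.exp (u / 2) * (1 - Real.exp (-u)) := by
  rw [mul_sub, mul_one, ← Real.exp_add]
  ring_nf

lemma q_eq (α β u : ℝ) :
    q α β u = Real.exp (-((α + β - 1) / 2) * u) * qR (β - α) u := by
  unfold q qR
  rcases eq_or_ne u 0 with hu | hu
  · simp [hu]
  · simp only [hu, if_false]
    set c := (α + β - 1) / 2
    set γ := β - α
    have hs : Real.sinh (γ * u / 2) / Real.sinh (u / 2)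
        = (Real.exp (γ * u / 2) - Real.exp (-(γ * u / 2)))
          / (Real.exp (u / 2) - Real.exp (-(u / 2))) := by
      rw [Real.sinh_eq, Real.sinh_eq]
      rw [div_div_div_comm, div_self (two_ne_zero : (2:ℝ) ≠ 0), div_one]
    rw [hs]
    have hnum : Real.exp (-c * u) * (Real.exp (γ * u / 2) - Real.exp (-(γ * u / 2)))
        = Real.exp (u / 2) * (Real.exp (-α * u) - Real.exp (-β * u)) := by
      rw [mul_sub, mul_sub, ← Real.exp_add, ← Real.exp_add, ← Real.exp_add, ← Real.exp_add]
      congr 2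
      · simp only [c, γ]; ring
      · simp only [c, γ]; ring
    have hden : Real.exp (u / 2) - Real.exp (-(u / 2)) = Real.exp (u / 2) * (1 - Real.exp (-u)) :=
      exp_sub_exp_half u
    rw [mul_div_assoc'] at *
    rw [hnum, hden, mul_div_mul_left _ _ (Real.exp_ne_zero _)]

theorem q_log_convex (α β : ℝ) (hα : 0 ≤ α) (hαβ : α < β) (h1 : 1 < β - α) :
    ConvexOn ℝ Set.univ (fun u => Real.log (q α β u)) := by
  set γ := β - α with hγdef
  set c := (α + β - 1) / 2 with hcdef
  have hγ0 : (0:ℝ) < γ := by simp only [hγdef]; linarith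
  have heq : (fun u => Real.log (q α β u)) = fun u => -c * u + qL γ u := by
    funext u
    rw [q_eq α β u, ← hγdef, ← hcdef, Real.log_mul (Real.exp_ne_zero _)
      (ne_of_gt (qR_pos hγ0 u)), Real.log_exp]
    rfl
  rw [heq]
  have hlin : ConvexOn ℝ (univ : Set ℝ) (fun u : ℝ => -c * u) := by
    refine ⟨convex_univ, fun x _ y _ a b ha hb hab => le_of_eq ?_⟩
    simp only [smul_eq_mul]
    ring
  exact hlin.add (qL_convexOn_univ h1)
end

section
/- Let 0 ≤ α < β with β - α < 1. Then the function q_{α,β}(u) = (e^{-αu} - e^{-βu})/(1 - e^{-u}) for u ≠ 0, with q_{α,β}(0) = β - α, is logarithmically concave on all of ℝ, i.e., ln q_{α,β} is concave. -/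
open Real Set Filter

lemma one_sub_exp_pos {u : ℝ} (hu : 0 < u) : 0 < 1 - Real.exp (-u) := by
  have : Real.exp (-u) < 1 := Real.exp_lt_one_iff.mpr (by linarith)
  linarith

lemma one_sub_exp_ne {u : ℝ} (hu : u ≠ 0) : 1 - Real.exp (-u) ≠ 0 := by
  intro h
  have : Real.exp (-u) = 1 := by linarith
  exact hu (by simpa [neg_eq_zero] using (Real.exp_eq_one_iff _).mp this)

lemma sinh_mul_le {c : ℝ} (hc0 : 0 ≤ c) (hc1 : c ≤ 1) {s : ℝ} (hs : 0 ≤ s) :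
    Real.sinh (c * s) ≤ c * Real.sinh s := by
  have hd : ∀ t : ℝ, HasDerivAt (fun t => c * Real.sinh t - Real.sinh (c * t))
      (c * Real.cosh t - Real.cosh (c * t) * c) t := by
    intro t
    exact ((Real.hasDerivAt_sinh t).const_mul c).sub
      (((Real.hasDerivAt_sinh (c*t)).comp t ((hasDerivAt_id t).const_mul c)).congr_deriv (by ring))
  have hmono : MonotoneOn (fun t => c * Real.sinh t - Real.sinh (c * t)) (Set.Ici 0) := by
    apply monotoneOn_of_deriv_nonneg (convex_Ici 0)
    · exact Continuous.continuousOn (by continuity)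
    · intro t _
      exact (hd t).differentiableAt.differentiableWithinAt
    · intro t ht
      rw [interior_Ici] at ht
      have ht' : (0:ℝ) < t := ht
      rw [(hd t).deriv]
      have hc : Real.cosh (c * t) ≤ Real.cosh t := by
        rw [Real.cosh_le_cosh, abs_of_nonneg (mul_nonneg hc0 ht'.le), abs_of_nonneg ht'.le]
        nlinarith
      nlinarith
  have h0 := hmono (self_mem_Ici) hs hs
  simp only [mul_zero, Real.sinh_zero, sub_zero] at h0
  linarith

lemma q_pos {α β : ℝ} (hαβ : α < β) (u : ℝ) : 0 < q α β u := by
  unfold q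
  rcases lt_trichotomy u 0 with hu | hu | hu
  · rw [if_neg hu.ne]
    apply div_pos_of_neg_of_neg
    · have : Real.exp (-α*u) < Real.exp (-β*u) := Real.exp_lt_exp.mpr (by nlinarith)
      linarith
    · have : (1:ℝ) < Real.exp (-u) := Real.one_lt_exp_iff.mpr (by linarith)
      linarith
  · simp [hu]; linarith
  · rw [if_neg hu.ne']
    apply div_pos
    · have : Real.exp (-β*u) < Real.exp (-α*u) := Real.exp_lt_exp.mpr (by nlinarith)
      linarith
    · exact one_sub_exp_pos hu

lemma one_sub_exp_eq (x : ℝ) :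
    1 - Real.exp (-x) = Real.exp (-x/2) * (2 * Real.sinh (x/2)) := by
  rw [Real.sinh_eq]
  have h : Real.exp (-x/2) * (2 * ((Real.exp (x/2) - Real.exp (-(x/2)))/2))
      = Real.exp (-x/2) * Real.exp (x/2) - Real.exp (-x/2) * Real.exp (-(x/2)) := by ring
  rw [h, ← Real.exp_add, ← Real.exp_add,
    show -x/2 + x/2 = 0 by ring, show -x/2 + -(x/2) = -x by ring, Real.exp_zero]

lemma exp_sub_exp_eq (α β u : ℝ) :
    Real.exp (-α*u) - Real.exp (-β*u)
      = Real.exp (-(α+β)*u/2) * (2 * Real.sinh ((β-α)*u/2)) := by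
  rw [Real.sinh_eq]
  have h : Real.exp (-(α+β)*u/2) * (2 * ((Real.exp ((β-α)*u/2) - Real.exp (-((β-α)*u/2)))/2))
      = Real.exp (-(α+β)*u/2) * Real.exp ((β-α)*u/2)
        - Real.exp (-(α+β)*u/2) * Real.exp (-((β-α)*u/2)) := by ring
  rw [h, ← Real.exp_add, ← Real.exp_add,
    show -(α+β)*u/2 + (β-α)*u/2 = -α*u by ring,
    show -(α+β)*u/2 + -((β-α)*u/2) = -β*u by ring]

lemma q_neg (α β u : ℝ) : q α β (-u) = Real.exp ((α+β-1)*u) * q α β u := by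
  rcases eq_or_ne u 0 with hu | hu
  · simp [hu]
  · unfold q
    rw [if_neg (neg_ne_zero.mpr hu), if_neg hu]
    have h1 := one_sub_exp_ne hu
    have h2 := one_sub_exp_ne (neg_ne_zero.mpr hu)
    rw [mul_div_assoc', div_eq_div_iff h2 h1]
    ring_nf
    simp only [← Real.exp_add]
    ring_nf

-- derivative helpers
lemma hasDerivAt_exp_neg (x : ℝ) : HasDerivAt (fun y : ℝ => Real.exp (-y)) (-Real.exp (-x)) x := by
  have h := (Real.hasDerivAt_exp (-x)).comp x (hasDerivAt_neg x)
  simp at h; exact h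

lemma hasDerivAt_one_sub_exp (x : ℝ) :
    HasDerivAt (fun y : ℝ => 1 - Real.exp (-y)) (Real.exp (-x)) x := by
  have h := (hasDerivAt_const x (1:ℝ)).sub (hasDerivAt_exp_neg x)
  simp at h; exact h

lemma hasDerivAt_log1exp {x : ℝ} (hx : 0 < x) :
    HasDerivAt (fun y : ℝ => Real.log (1 - Real.exp (-y)))
      (Real.exp (-x) / (1 - Real.exp (-x))) x :=
  (hasDerivAt_one_sub_exp x).log (ne_of_gt (one_sub_exp_pos hx))

lemma hasDerivAt_G1 {x : ℝ} (hx : 0 < x) :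
    HasDerivAt (fun y : ℝ => Real.exp (-y) / (1 - Real.exp (-y)))
      (-(Real.exp (-x) / (1 - Real.exp (-x))^2)) x := by
  have h := (hasDerivAt_exp_neg x).div (hasDerivAt_one_sub_exp x)
    (ne_of_gt (one_sub_exp_pos hx))
  refine h.congr_deriv ?_
  have hne := ne_of_gt (one_sub_exp_pos hx)
  ring

lemma exp_div_sq {x : ℝ} (hx : 0 < x) :
    Real.exp (-x) / (1 - Real.exp (-x))^2 = 1 / (2 * Real.sinh (x/2))^2 := by
  have hs : Real.sinh (x/2) ≠ 0 := ne_of_gt (Real.sinh_pos_iff.mpr (by linarith))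
  have he2 : Real.exp (-x/2)^2 = Real.exp (-x) := by
    rw [sq, ← Real.exp_add]; ring_nf
  rw [one_sub_exp_eq x, mul_pow, he2]
  have he : Real.exp (-x) ≠ 0 := Real.exp_ne_zero _
  field_simp

lemma hasDerivAt_F1_s5 (α : ℝ) {γ : ℝ} (hγ : 0 < γ) {u : ℝ} (hu : 0 < u) :
    HasDerivAt
      (fun y : ℝ => -α*y + (Real.log (1 - Real.exp (-(γ*y))) - Real.log (1 - Real.exp (-y))))
      (-α + (γ * (Real.exp (-(γ*u)) / (1 - Real.exp (-(γ*u)))) -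
        Real.exp (-u) / (1 - Real.exp (-u)))) u := by
  have ha : HasDerivAt (fun y : ℝ => -α*y) (-α) u := by
    simpa using (hasDerivAt_id u).const_mul (-α)
  have hb : HasDerivAt (fun y : ℝ => Real.log (1 - Real.exp (-(γ*y))))
      (γ * (Real.exp (-(γ*u)) / (1 - Real.exp (-(γ*u))))) u := by
    have h := (hasDerivAt_log1exp (mul_pos hγ hu)).comp u ((hasDerivAt_id u).const_mul γ)
    simp [Function.comp, mul_comm] at h; exact h
  exact ha.add (hb.sub (hasDerivAt_log1exp hu))

lemma hasDerivAt_D1 (α : ℝ) {γ : ℝ} (hγ : 0 < γ) {u : ℝ} (hu : 0 < u) :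
    HasDerivAt
      (fun y : ℝ => -α + (γ * (Real.exp (-(γ*y)) / (1 - Real.exp (-(γ*y)))) -
        Real.exp (-y) / (1 - Real.exp (-y))))
      (γ^2 * (-(Real.exp (-(γ*u)) / (1 - Real.exp (-(γ*u)))^2)) -
        (-(Real.exp (-u) / (1 - Real.exp (-u))^2))) u := by
  have hb : HasDerivAt (fun y : ℝ => γ * (Real.exp (-(γ*y)) / (1 - Real.exp (-(γ*y)))))
      (γ^2 * (-(Real.exp (-(γ*u)) / (1 - Real.exp (-(γ*u)))^2))) u := by
    have h := ((hasDerivAt_G1 (mul_pos hγ hu)).comp u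
      ((hasDerivAt_id u).const_mul γ)).const_mul γ
    refine h.congr_deriv ?_
    ring
  have hc := hasDerivAt_G1 hu
  exact ((hasDerivAt_const u (-α)).add (hb.sub hc)).congr_deriv (by ring)

lemma D2_nonpos {γ : ℝ} (hγ0 : 0 < γ) (hγ1 : γ ≤ 1) {u : ℝ} (hu : 0 < u) :
    γ^2 * (-(Real.exp (-(γ*u)) / (1 - Real.exp (-(γ*u)))^2)) -
      (-(Real.exp (-u) / (1 - Real.exp (-u))^2)) ≤ 0 := by
  have hγu : 0 < γ * u := mul_pos hγ0 hu
  rw [exp_div_sq hγu, exp_div_sq hu]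
  have hs : 0 < Real.sinh (u/2) := Real.sinh_pos_iff.mpr (by linarith)
  have ht : 0 < Real.sinh (γ*u/2) := Real.sinh_pos_iff.mpr (by positivity)
  have key : Real.sinh (γ*(u/2)) ≤ γ * Real.sinh (u/2) := sinh_mul_le hγ0.le hγ1 (by linarith)
  rw [show γ*u/2 = γ*(u/2) by ring] at ht ⊢
  have h2 : (2*Real.sinh (γ*(u/2)))^2 ≤ γ^2 * (2*Real.sinh (u/2))^2 := by nlinarith
  have h3 : 1/(2*Real.sinh (u/2))^2 ≤ γ^2 * (1/(2*Real.sinh (γ*(u/2)))^2) := by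
    rw [mul_one_div, div_le_div_iff₀ (by positivity) (by positivity)]
    linarith
  linarith

lemma tendsto_one_sub_exp_div (c : ℝ) :
    Filter.Tendsto (fun u : ℝ => (1 - Real.exp (-(c*u)))/u) (nhdsWithin 0 {(0:ℝ)}ᶜ) (nhds c) := by
  have h1 : HasDerivAt (fun y : ℝ => c*y) c 0 := by simpa using (hasDerivAt_id (0:ℝ)).const_mul c
  have h2 : HasDerivAt (fun y : ℝ => Real.exp (-(c*y))) (-c) 0 := by
    have := (hasDerivAt_exp_neg (c*0)).comp 0 h1
    simp at this; exact this
  have hd : HasDerivAt (fun y : ℝ => 1 - Real.exp (-(c*y))) c 0 := by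
    have := (hasDerivAt_const (0:ℝ) (1:ℝ)).sub h2
    simp at this; exact this
  have h := hasDerivAt_iff_tendsto_slope.mp hd
  refine h.congr' ?_
  filter_upwards [self_mem_nhdsWithin] with u hu
  rw [slope_def_field]
  simp

lemma upper_bound {α β : ℝ} (hαβ : α < β) (hγ1 : β - α ≤ 1) {z : ℝ} (hz : 0 < z) :
    q α β z ≤ (β - α) * Real.exp ((1-α-β)/2*z) := by
  rw [q, if_neg hz.ne']
  rw [div_le_iff₀ (one_sub_exp_pos hz)]
  rw [exp_sub_exp_eq α β z, one_sub_exp_eq z]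
  have hE : (β-α) * Real.exp ((1-α-β)/2*z) * (Real.exp (-z/2) * (2 * Real.sinh (z/2)))
      = Real.exp (-(α+β)*z/2) * ((β-α) * (2 * Real.sinh (z/2))) := by
    rw [show (β-α) * Real.exp ((1-α-β)/2*z) * (Real.exp (-z/2) * (2 * Real.sinh (z/2)))
        = (Real.exp ((1-α-β)/2*z) * Real.exp (-z/2)) * ((β-α) * (2 * Real.sinh (z/2))) by ring,
      ← Real.exp_add, show (1-α-β)/2*z + -z/2 = -(α+β)*z/2 by ring]
  rw [hE]
  have key : Real.sinh ((β-α)*(z/2)) ≤ (β-α) * Real.sinh (z/2) :=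
    sinh_mul_le (by linarith) hγ1 (by linarith)
  have h : 2 * Real.sinh ((β-α)*z/2) ≤ (β-α) * (2 * Real.sinh (z/2)) := by
    rw [show (β-α)*z/2 = (β-α)*(z/2) by ring]; linarith
  exact mul_le_mul_of_nonneg_left h (Real.exp_pos _).le

theorem q_log_concave (α β : ℝ) (hα : 0 ≤ α) (hαβ : α < β) (h1 : β - α < 1) :
    ConcaveOn ℝ Set.univ (fun u => Real.log (q α β u)) := by
  set γ : ℝ := β - α with hγdef
  have hγ0 : 0 < γ := by rw [hγdef]; linarith
  have hγ1 : γ < 1 := h1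
  set F : ℝ → ℝ := fun u => Real.log (q α β u) with hFdef
  have hqpos : ∀ u, 0 < q α β u := q_pos hαβ
  have hq0 : q α β 0 = γ := by simp [q, hγdef]
  have hF0 : F 0 = Real.log γ := by rw [hFdef]; simp only; rw [hq0]
  -- formula for q on u ≠ 0
  have hqformula : ∀ u : ℝ, u ≠ 0 →
      q α β u = Real.exp (-α*u) * (1 - Real.exp (-(γ*u))) / (1 - Real.exp (-u)) := by
    intro u hu
    rw [q, if_neg hu]
    congr 1
    rw [mul_sub, mul_one, ← Real.exp_add,
      show -α*u + -(γ*u) = -β*u by rw [hγdef]; ring]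
  -- formula for F on u > 0
  have hFformula : ∀ u : ℝ, 0 < u → F u =
      -α*u + (Real.log (1 - Real.exp (-(γ*u))) - Real.log (1 - Real.exp (-u))) := by
    intro u hu
    have hγu : 0 < γ * u := mul_pos hγ0 hu
    have h2 : (0:ℝ) < 1 - Real.exp (-(γ*u)) := one_sub_exp_pos hγu
    have h3 := one_sub_exp_pos hu
    rw [hFdef]
    simp only
    rw [hqformula u hu.ne', Real.log_div (by positivity) (ne_of_gt h3),
      Real.log_mul (Real.exp_ne_zero _) (ne_of_gt h2), Real.log_exp]
    ring
  -- symmetry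
  have hFsymm : ∀ u : ℝ, F (-u) = (α+β-1)*u + F u := by
    intro u
    rw [hFdef]
    simp only
    rw [q_neg, Real.log_mul (Real.exp_ne_zero _) (hqpos u).ne', Real.log_exp]
  -- derivative data on Ioi 0
  have hFD : ∀ x : ℝ, 0 < x → HasDerivAt F
      (-α + (γ * (Real.exp (-(γ*x)) / (1 - Real.exp (-(γ*x)))) -
        Real.exp (-x) / (1 - Real.exp (-x)))) x := by
    intro x hx
    have hev : F =ᶠ[nhds x]
        (fun y : ℝ => -α*y + (Real.log (1 - Real.exp (-(γ*y))) - Real.log (1 - Real.exp (-y)))) :=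
      Filter.eventuallyEq_of_mem (Ioi_mem_nhds hx) (fun u hu => hFformula u hu)
    exact (hasDerivAt_F1_s5 α hγ0 hx).congr_of_eventuallyEq hev
  have hderivF : ∀ x ∈ Set.Ioi (0:ℝ), deriv F x =
      -α + (γ * (Real.exp (-(γ*x)) / (1 - Real.exp (-(γ*x)))) -
        Real.exp (-x) / (1 - Real.exp (-x))) := fun x hx => (hFD x hx).deriv
  have hD1at : ∀ x : ℝ, 0 < x → HasDerivAt (deriv F)
      (γ^2 * (-(Real.exp (-(γ*x)) / (1 - Real.exp (-(γ*x)))^2)) -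
        (-(Real.exp (-x) / (1 - Real.exp (-x))^2))) x := by
    intro x hx
    have hev2 : deriv F =ᶠ[nhds x]
        (fun y : ℝ => -α + (γ * (Real.exp (-(γ*y)) / (1 - Real.exp (-(γ*y)))) -
          Real.exp (-y) / (1 - Real.exp (-y)))) :=
      Filter.eventuallyEq_of_mem (Ioi_mem_nhds hx) (fun u hu => hderivF u hu)
    exact (hasDerivAt_D1 α hγ0 hx).congr_of_eventuallyEq hev2
  -- continuity on Ici 0
  have hcontOn : ContinuousOn F (Set.Ici 0) := by
    intro x hx
    rcases eq_or_lt_of_le (Set.mem_Ici.mp hx) with h | h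
    · subst h
      have hmono : nhdsWithin (0:ℝ) (Set.Ioi 0) ≤ nhdsWithin (0:ℝ) {(0:ℝ)}ᶜ :=
        nhdsWithin_mono 0 (fun u hu => ne_of_gt hu)
      have hta : Filter.Tendsto (fun u : ℝ => Real.exp (-α*u))
          (nhdsWithin (0:ℝ) (Set.Ioi 0)) (nhds 1) := by
        have hc : Continuous (fun u : ℝ => Real.exp (-α*u)) := by continuity
        have h2 : Filter.Tendsto (fun u : ℝ => Real.exp (-α*u)) (nhds 0) (nhds 1) := by
          simpa using hc.tendsto 0
        exact h2.mono_left nhdsWithin_le_nhds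
      have htb := (tendsto_one_sub_exp_div γ).mono_left hmono
      have htc : Filter.Tendsto (fun u : ℝ => (1 - Real.exp (-u))/u)
          (nhdsWithin (0:ℝ) (Set.Ioi 0)) (nhds 1) := by
        have := (tendsto_one_sub_exp_div 1).mono_left hmono
        simpa using this
      have hqt : Filter.Tendsto (fun u => q α β u) (nhdsWithin (0:ℝ) (Set.Ioi 0)) (nhds γ) := by
        have h := (hta.mul htb).div htc (by norm_num)
        rw [show (1:ℝ)*γ/1 = γ by ring] at h
        refine h.congr' ?_
        filter_upwards [self_mem_nhdsWithin] with u hu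
        have hu0 : u ≠ 0 := ne_of_gt hu
        rw [hqformula u hu0]
        have hne := one_sub_exp_ne hu0
        simp only [Pi.div_apply]
        field_simp
      have hlog : Filter.Tendsto F (nhdsWithin (0:ℝ) (Set.Ioi 0)) (nhds (Real.log γ)) :=
        ((Real.continuousAt_log (ne_of_gt hγ0)).tendsto).comp hqt
      show ContinuousWithinAt F (Set.Ici 0) 0
      rw [ContinuousWithinAt, hF0,
        show Set.Ici (0:ℝ) = insert 0 (Set.Ioi 0) from (Set.Ioi_insert).symm,
        nhdsWithin_insert, Filter.tendsto_sup]
      exact ⟨hF0 ▸ tendsto_pure_nhds F 0, hlog⟩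
    · exact ((hFD x h).continuousAt).continuousWithinAt
  -- concavity on Ici 0
  have hIci : ConcaveOn ℝ (Set.Ici 0) F := by
    apply concaveOn_of_deriv2_nonpos (convex_Ici 0) hcontOn
    · rw [interior_Ici]
      exact fun x hx => (hFD x hx).differentiableAt.differentiableWithinAt
    · rw [interior_Ici]
      exact fun x hx => (hD1at x hx).differentiableAt.differentiableWithinAt
    · rw [interior_Ici]
      intro x hx
      show deriv (deriv F) x ≤ 0
      rw [(hD1at x hx).deriv]
      exact D2_nonpos hγ0 hγ1.le hx
  -- concavity on Iic 0
  have hIic : ConcaveOn ℝ (Set.Iic 0) F := by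
    refine ⟨convex_Iic 0, ?_⟩
    intro x hx y hy a b ha hb hab
    have hx' : -x ∈ Set.Ici (0:ℝ) := by
      simp only [Set.mem_Iic] at hx; simp only [Set.mem_Ici]; linarith
    have hy' : -y ∈ Set.Ici (0:ℝ) := by
      simp only [Set.mem_Iic] at hy; simp only [Set.mem_Ici]; linarith
    have h := hIci.2 hx' hy' ha hb hab
    have e1 : a • (-x) + b • (-y) = -(a • x + b • y) := by
      simp only [smul_eq_mul]; ring
    rw [e1, hFsymm x, hFsymm y, hFsymm (a • x + b • y)] at h
    simp only [smul_eq_mul] at h ⊢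
    nlinarith [h]
  -- crossing bounds
  set c : ℝ := (1-α-β)/2 with hcdef
  have hupper : ∀ z : ℝ, 0 < z → F z - F 0 ≤ c * z := by
    intro z hz
    have hq := upper_bound hαβ hγ1.le hz
    have hlog := Real.log_le_log (hqpos z) hq
    rw [Real.log_mul (ne_of_gt hγ0) (Real.exp_ne_zero _), Real.log_exp] at hlog
    rw [hFdef]
    simp only
    rw [hq0, hcdef]
    linarith
  have hlower : ∀ x : ℝ, x < 0 → c * (-x) ≤ F 0 - F x := by
    intro x hx
    have ht : (0:ℝ) < -x := by linarith
    have h := hupper (-x) ht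
    have hs := hFsymm (-x)
    rw [neg_neg] at hs
    -- hs : F x = (α+β-1)*(-x) + F (-x)
    rw [hcdef] at h ⊢
    linarith
  -- glue
  rw [concaveOn_iff_slope_anti_adjacent]
  refine ⟨convex_univ, fun x y z _ _ hxy hyz => ?_⟩
  show (F z - F y) / (z - y) ≤ (F y - F x) / (y - x)
  by_cases hx0 : 0 ≤ x
  · exact hIci.slope_anti_adjacent (Set.mem_Ici.mpr hx0)
      (Set.mem_Ici.mpr (by linarith)) hxy hyz
  · by_cases hz0 : z ≤ 0
    · exact hIic.slope_anti_adjacent (Set.mem_Iic.mpr (by linarith))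
        (Set.mem_Iic.mpr hz0) hxy hyz
    · push_neg at hx0 hz0
      rcases lt_trichotomy y 0 with hy0 | hy0 | hy0
      · -- x < y < 0 < z
        have s1 := hIic.slope_anti_adjacent (Set.mem_Iic.mpr (by linarith : x ≤ 0))
          (Set.mem_Iic.mpr le_rfl) hxy hy0
        have s2 : (F z - F y) / (z - y) ≤ (F 0 - F y) / (0 - y) := by
          rw [div_le_div_iff₀ (by linarith) (by linarith)]
          have hu := hupper z hz0
          have hl := hlower y hy0
          nlinarith [mul_nonneg (by linarith : (0:ℝ) ≤ -y) (by linarith : 0 ≤ c*z - (F z - F 0)),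
            mul_nonneg (by linarith : (0:ℝ) ≤ z) (by linarith : 0 ≤ (F 0 - F y) - c*(-y))]
        linarith
      · -- y = 0
        subst hy0
        have hu := hupper z hz0
        have hl := hlower x hx0
        rw [div_le_div_iff₀ (by linarith) (by linarith)]
        nlinarith [mul_nonneg (by linarith : (0:ℝ) ≤ -x) (by linarith : 0 ≤ c*z - (F z - F 0)),
          mul_nonneg (by linarith : (0:ℝ) ≤ z) (by linarith : 0 ≤ (F 0 - F x) - c*(-x))]
      · -- x < 0 < y < z
        have s1 := hIci.slope_anti_adjacent (Set.mem_Ici.mpr le_rfl)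
          (Set.mem_Ici.mpr (by linarith : (0:ℝ) ≤ z)) hy0 hyz
        have s2 : (F y - F 0) / (y - 0) ≤ (F y - F x) / (y - x) := by
          rw [div_le_div_iff₀ (by linarith) (by linarith)]
          have hu := hupper y hy0
          have hl := hlower x hx0
          nlinarith [mul_nonneg (by linarith : (0:ℝ) ≤ -x) (by linarith : 0 ≤ c*y - (F y - F 0)),
            mul_nonneg (by linarith : (0:ℝ) ≤ y) (by linarith : 0 ≤ (F 0 - F x) - c*(-x))]
        linarith
end

section
/- Let s, t ≥ 0 with |t - s| > 1. Then the function z(x) = [Γ(x+t)/Γ(x+s)]^{1/(t-s)} − x is concave on (0, ∞). -/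
noncomputable def z (s t x : ℝ) : ℝ :=
  (Real.Gamma (x + t) / Real.Gamma (x + s)) ^ ((1 : ℝ) / (t - s)) - x

open Real Finset Filter Topology

-- per-term telescoping bound
lemma per_term (a e q : ℝ) (ha : 0 < a) (he : 0 ≤ e) (hq : a + 1 ≤ q) :
    1/q - 1/(q+(e+1)) ≤ (e+1) * (1/(q + e*(a-1)/(2*a+e)) - 1/(q + e*(a-1)/(2*a+e) + 1)) := by
  have hD : 0 < 2*a+e := by linarith
  set c : ℝ := e*(a-1)/(2*a+e) with hc
  have hcD : c * (2*a+e) = e*(a-1) := by rw [hc]; exact div_mul_cancel₀ _ hD.ne'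
  have ha1c : a + 1 + c = 2*a*(a+(e+1))/(2*a+e) := by rw [hc]; field_simp; ring
  have hqc : 0 < q + c := by
    have : 0 < a + 1 + c := by rw [ha1c]; positivity
    linarith
  have hq0 : 0 < q := by linarith
  have hqd : 0 < q + (e+1) := by linarith
  have hqc1 : 0 < q + c + 1 := by linarith
  have key : (q+c) * (q+c+1) ≤ q * (q+(e+1)) := by
    have expand : ((q+c)*(q+c+1) - q*(q+(e+1)))*(2*a+e)^2
        = (e*(a-1))^2 + e*(a-1)*(2*a+e) - q*(e*(e+2)*(2*a+e)) := by
      linear_combination (2*q*(2*a+e) + c*(2*a+e) + e*(a-1) + (2*a+e)) * hcD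
    have inner : (0:ℝ) ≤ 2*a^2+6*a+e*(a^2+5*a+2)+e^2*(a+1) := by positivity
    have step : (e*(a-1))^2 + e*(a-1)*(2*a+e) - q*(e*(e+2)*(2*a+e)) ≤ 0 := by
      nlinarith [mul_le_mul_of_nonneg_right hq (show (0:ℝ) ≤ e*(e+2)*(2*a+e) by positivity),
        mul_nonneg he inner]
    nlinarith [expand, step, sq_nonneg (2*a+e)]
  have L1 : 1/q - 1/(q+(e+1)) = (e+1)/(q*(q+(e+1))) := by field_simp; ring
  have L2 : 1/(q+c) - 1/(q+c+1) = 1/((q+c)*(q+c+1)) := by field_simp; ring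
  rw [L1, L2, mul_one_div, div_le_div_iff₀ (by positivity) (by positivity)]
  nlinarith [mul_le_mul_of_nonneg_left key (show (0:ℝ) ≤ e+1 by linarith)]

lemma tail_bound (a e : ℝ) (ha : 0 < a) (he : 0 ≤ e) (n : ℕ) :
    ∑ j ∈ range n, (1/(a+1+j) - 1/(a+1+j+(e+1))) ≤ (e+1)*(2*a+e)/(2*a*(a+(e+1))) := by
  have hD : 0 < 2*a+e := by linarith
  set c : ℝ := e*(a-1)/(2*a+e) with hc
  have ha1c : a + 1 + c = 2*a*(a+(e+1))/(2*a+e) := by rw [hc]; field_simp; ring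
  have h0 : 0 < a + 1 + c := by rw [ha1c]; positivity
  have main : ∀ m : ℕ, ∑ j ∈ range m, (1/(a+1+j) - 1/(a+1+j+(e+1)))
      ≤ (e+1)*(1/(a+1+c) - 1/(a+1+m+c)) := by
    intro m
    induction m with
    | zero => simp
    | succ m ih =>
      rw [Finset.sum_range_succ]
      have hper := per_term a e (a+1+m) ha he (by push_cast; linarith [Nat.cast_nonneg (α := ℝ) m])
      have harr1 : a+1+(m:ℝ) + c = a+1+(m:ℝ)+c := rfl
      calc ∑ j ∈ range m, (1/(a+1+j) - 1/(a+1+j+(e+1))) + (1/(a+1+m) - 1/(a+1+m+(e+1)))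
          ≤ (e+1)*(1/(a+1+c) - 1/(a+1+m+c))
              + (e+1)*(1/(a+1+(m:ℝ)+c) - 1/(a+1+(m:ℝ)+c+1)) := by
            refine add_le_add ih ?_
            convert hper using 4 <;> ring
        _ = (e+1)*(1/(a+1+c) - 1/(a+1+(m+1:ℕ)+c)) := by push_cast; ring_nf
  calc ∑ j ∈ range n, (1/(a+1+j) - 1/(a+1+j+(e+1)))
      ≤ (e+1)*(1/(a+1+c) - 1/(a+1+n+c)) := main n
    _ ≤ (e+1)*(1/(a+1+c)) := by
        have : 0 < a+1+(n:ℝ)+c := by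
          have := Nat.cast_nonneg (α := ℝ) n; linarith
        have : 0 ≤ 1/(a+1+(n:ℝ)+c) := by positivity
        nlinarith
    _ = (e+1)*(2*a+e)/(2*a*(a+(e+1))) := by rw [ha1c]; field_simp

lemma key_ineq (e : ℝ) (he : 0 ≤ e) :
    ∀ (n : ℕ) (a : ℝ), 0 < a →
    (∑ j ∈ range n, (1/(a+j) - 1/(a+j+(e+1))))^2
      ≤ (e+1) * ∑ j ∈ range n, (1/(a+j)^2 - 1/(a+j+(e+1))^2) := by
  intro n
  induction n with
  | zero => simp
  | succ n ih =>
    intro a ha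
    have hsplit1 : ∑ j ∈ range (n+1), (1/(a+j) - 1/(a+j+(e+1)))
        = (∑ j ∈ range n, (1/(a+1+j) - 1/(a+1+j+(e+1)))) + (1/a - 1/(a+(e+1))) := by
      rw [Finset.sum_range_succ' (fun j : ℕ => 1/(a+j) - 1/(a+j+(e+1))) n]
      congr 1
      · refine Finset.sum_congr rfl fun j _ => ?_
        push_cast; ring_nf
      · norm_num
    have hsplit2 : ∑ j ∈ range (n+1), (1/(a+j)^2 - 1/(a+j+(e+1))^2)
        = (∑ j ∈ range n, (1/(a+1+j)^2 - 1/(a+1+j+(e+1))^2)) + (1/a^2 - 1/(a+(e+1))^2) := by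
      rw [Finset.sum_range_succ' (fun j : ℕ => 1/(a+j)^2 - 1/(a+j+(e+1))^2) n]
      congr 1
      · refine Finset.sum_congr rfl fun j _ => ?_
        push_cast; ring_nf
      · norm_num
    rw [hsplit1, hsplit2]
    have ha1 : 0 < a + 1 := by linarith
    have ihA := ih (a+1) ha1
    have htail := tail_bound a e ha he n
    set A := ∑ j ∈ range n, (1/(a+1+j) - 1/(a+1+j+(e+1))) with hA
    set B := ∑ j ∈ range n, (1/(a+1+j)^2 - 1/(a+1+j+(e+1))^2) with hB
    have hihA : A^2 ≤ (e+1) * B := by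
      calc A^2 = (∑ j ∈ range n, (1/(a+1+j) - 1/(a+1+j+(e+1))))^2 := by rw [hA]
        _ ≤ (e+1) * ∑ j ∈ range n, (1/(a+1+j)^2 - 1/(a+1+j+(e+1))^2) := ihA
        _ = (e+1) * B := by rw [hB]
    have hA0 : 0 ≤ A := by
      apply Finset.sum_nonneg
      intro j _
      have h1 : 0 < a+1+(j:ℝ) := by have := Nat.cast_nonneg (α := ℝ) j; linarith
      have h2 : 0 < a+1+(j:ℝ)+(e+1) := by linarith
      have : 1/(a+1+(j:ℝ)+(e+1)) ≤ 1/(a+1+(j:ℝ)) := by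
        apply one_div_le_one_div_of_le h1; linarith
      linarith
    have hd0 : 0 ≤ 1/a - 1/(a+(e+1)) := by
      have : 1/(a+(e+1)) ≤ 1/a := by apply one_div_le_one_div_of_le ha; linarith
      linarith
    have heq : 2*((e+1)*(2*a+e)/(2*a*(a+(e+1))))*(1/a - 1/(a+(e+1))) + (1/a - 1/(a+(e+1)))^2
        = (e+1)*(1/a^2 - 1/(a+(e+1))^2) := by
      have h1 : a + (e+1) ≠ 0 := by positivity
      field_simp
      ring
    nlinarith [mul_le_mul_of_nonneg_right htail hd0, sq_nonneg A]

lemma concave_approx (s t C : ℝ) (hs : 0 ≤ s) (h1 : 1 < t - s) (n : ℕ) :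
    ConcaveOn ℝ (Set.Ioi (0:ℝ))
      (fun x => Real.exp (C + (t-s)⁻¹ * ∑ j ∈ range n, (Real.log (x+s+j) - Real.log (x+t+j))) - x) := by
  set δ : ℝ := t - s with hδdef
  have hδ1 : 1 < δ := h1
  have hδ0 : 0 < δ := by linarith
  set F : ℝ → ℝ := fun x => Real.exp (C + δ⁻¹ * ∑ j ∈ range n, (Real.log (x+s+j) - Real.log (x+t+j))) with hF
  set P : ℝ → ℝ := fun x => δ⁻¹ * ∑ j ∈ range n, (1/(x+s+j) - 1/(x+t+j)) with hP
  set Q : ℝ → ℝ := fun x => δ⁻¹ * ∑ j ∈ range n, (-(1/(x+s+j)^2) - -(1/(x+t+j)^2)) with hQ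
  have hposs : ∀ (x : ℝ), 0 < x → ∀ j : ℕ, 0 < x + s + j := by
    intro x hx j
    have := Nat.cast_nonneg (α := ℝ) j; linarith
  have hpost : ∀ (x : ℝ), 0 < x → ∀ j : ℕ, 0 < x + t + j := by
    intro x hx j
    have := Nat.cast_nonneg (α := ℝ) j; have : (0:ℝ) ≤ j := this; have hts : 0 < t := by linarith
    have := Nat.cast_nonneg (α := ℝ) j; linarith
  -- derivative of the log-sum
  have hsum : ∀ (x : ℝ), 0 < x → HasDerivAt (fun y => ∑ j ∈ range n, (Real.log (y+s+j) - Real.log (y+t+j)))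
      (∑ j ∈ range n, (1/(x+s+j) - 1/(x+t+j))) x := by
    intro x hx
    apply HasDerivAt.fun_sum
    intro j _
    have hls : HasDerivAt (fun y : ℝ => Real.log (y+s+j)) (1/(x+s+j)) x := by
      simpa using (((hasDerivAt_id x).add_const s).add_const (j:ℝ)).log (ne_of_gt (hposs x hx j))
    have hlt : HasDerivAt (fun y : ℝ => Real.log (y+t+j)) (1/(x+t+j)) x := by
      simpa using (((hasDerivAt_id x).add_const t).add_const (j:ℝ)).log (ne_of_gt (hpost x hx j))
    exact hls.sub hlt
  have hFder : ∀ (x : ℝ), 0 < x → HasDerivAt F (F x * P x) x := by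
    intro x hx
    have := ((hasDerivAt_const x C).add ((hsum x hx).const_mul δ⁻¹)).exp
    simpa [hF, hP, zero_add] using this
  have hPder : ∀ (x : ℝ), 0 < x → HasDerivAt P (Q x) x := by
    intro x hx
    apply HasDerivAt.const_mul
    apply HasDerivAt.fun_sum
    intro j _
    have hs' : HasDerivAt (fun y : ℝ => 1/(y+s+j)) (-(1/(x+s+j)^2)) x := by
      have := (((hasDerivAt_id x).add_const s).add_const (j:ℝ)).fun_inv (ne_of_gt (hposs x hx j))
      simpa [neg_div, one_div] using this
    have ht' : HasDerivAt (fun y : ℝ => 1/(y+t+j)) (-(1/(x+t+j)^2)) x := by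
      have := (((hasDerivAt_id x).add_const t).add_const (j:ℝ)).fun_inv (ne_of_gt (hpost x hx j))
      simpa [neg_div, one_div] using this
    exact hs'.sub ht'
  have hF1der : ∀ (x : ℝ), 0 < x → HasDerivAt (fun y => F y * P y) (F x * (P x^2 + Q x)) x := by
    intro x hx
    have := (hFder x hx).fun_mul (hPder x hx)
    exact this.congr_deriv (by ring)
  -- second derivative nonpositive
  have hkey : ∀ (x : ℝ), 0 < x → F x * (P x^2 + Q x) ≤ 0 := by
    intro x hx
    have hFpos : 0 < F x := Real.exp_pos _
    have ha : 0 < x + s := by linarith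
    have hk := key_ineq (δ - 1) (by linarith) n (x+s) ha
    have hrw1 : ∑ j ∈ range n, (1/((x+s)+j) - 1/((x+s)+j+((δ-1)+1)))
        = ∑ j ∈ range n, (1/(x+s+j) - 1/(x+t+j)) := by
      refine Finset.sum_congr rfl fun j _ => ?_
      have : (x+s) + (j:ℝ) + ((δ-1)+1) = x + t + j := by rw [hδdef]; ring
      rw [this]
    have hrw2 : ∑ j ∈ range n, (1/((x+s)+j)^2 - 1/((x+s)+j+((δ-1)+1))^2)
        = ∑ j ∈ range n, (1/(x+s+j)^2 - 1/(x+t+j)^2) := by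
      refine Finset.sum_congr rfl fun j _ => ?_
      have : (x+s) + (j:ℝ) + ((δ-1)+1) = x + t + j := by rw [hδdef]; ring
      rw [this]
    rw [hrw1, hrw2] at hk
    have hQ' : Q x = -(δ⁻¹ * ∑ j ∈ range n, (1/(x+s+j)^2 - 1/(x+t+j)^2)) := by
      rw [hQ]
      have hsn : ∑ j ∈ range n, (-(1/(x+s+j)^2) - -(1/(x+t+j)^2))
          = -∑ j ∈ range n, (1/(x+s+j)^2 - 1/(x+t+j)^2) := by
        rw [← Finset.sum_neg_distrib]
        exact Finset.sum_congr rfl fun j _ => by ring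
      simp only [hsn, mul_neg]
    have hP2 : P x ^ 2 = δ⁻¹ * δ⁻¹ * (∑ j ∈ range n, (1/(x+s+j) - 1/(x+t+j)))^2 := by
      simp only [hP]; ring
    rw [hQ', hP2]
    have hd : (δ-1)+1 = δ := by ring
    rw [hd] at hk
    have hδinv : 0 < δ⁻¹ := by positivity
    have : δ⁻¹ * δ⁻¹ * (∑ j ∈ range n, (1/(x+s+j) - 1/(x+t+j)))^2
        ≤ δ⁻¹ * δ⁻¹ * (δ * ∑ j ∈ range n, (1/(x+s+j)^2 - 1/(x+t+j)^2)) := by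
      apply mul_le_mul_of_nonneg_left hk (by positivity)
    have heq : δ⁻¹ * δ⁻¹ * (δ * ∑ j ∈ range n, (1/(x+s+j)^2 - 1/(x+t+j)^2))
        = δ⁻¹ * ∑ j ∈ range n, (1/(x+s+j)^2 - 1/(x+t+j)^2) := by
      rw [show δ⁻¹ * δ⁻¹ * (δ * ∑ j ∈ range n, (1/(x+s+j)^2 - 1/(x+t+j)^2))
          = (δ * δ⁻¹) * (δ⁻¹ * ∑ j ∈ range n, (1/(x+s+j)^2 - 1/(x+t+j)^2)) from by ring,
        mul_inv_cancel₀ (ne_of_gt hδ0), one_mul]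
    nlinarith [hFpos]
  -- assemble
  have hconc : ConcaveOn ℝ (Set.Ioi (0:ℝ)) F := by
    apply concaveOn_of_hasDerivWithinAt2_nonpos (convex_Ioi 0) (f' := fun x => F x * P x)
      (f'' := fun x => F x * (P x^2 + Q x))
    · intro x hx
      exact ((hFder x hx).continuousAt).continuousWithinAt
    · intro x hx
      rw [interior_Ioi] at hx
      exact ((hFder x hx).hasDerivWithinAt)
    · intro x hx
      rw [interior_Ioi] at hx
      exact ((hF1der x hx).hasDerivWithinAt)
    · intro x hx
      rw [interior_Ioi] at hx
      exact hkey x hx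
  exact hconc.sub (convexOn_id (convex_Ioi 0))

lemma concaveOn_limit {F : ℕ → ℝ → ℝ} {f : ℝ → ℝ}
    (hc : ∀ n, ConcaveOn ℝ (Set.Ioi (0:ℝ)) (F n))
    (hlim : ∀ x ∈ Set.Ioi (0:ℝ), Tendsto (fun n => F n x) atTop (𝓝 (f x))) :
    ConcaveOn ℝ (Set.Ioi (0:ℝ)) f := by
  refine ⟨convex_Ioi 0, fun x hx y hy a b ha hb hab => ?_⟩
  have hmem : a • x + b • y ∈ Set.Ioi (0:ℝ) := (convex_Ioi 0) hx hy ha hb hab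
  refine le_of_tendsto_of_tendsto'
    (((hlim x hx).const_mul a).add ((hlim y hy).const_mul b)) (hlim _ hmem) (fun n => ?_)
  simpa [smul_eq_mul] using (hc n).2 hx hy ha hb hab

lemma z_concave_of_lt (s t : ℝ) (hs : 0 ≤ s) (h1 : 1 < t - s) :
    ConcaveOn ℝ (Set.Ioi 0) (z s t) := by
  have hδ0 : 0 < t - s := by linarith
  have hδne : t - s ≠ 0 := ne_of_gt hδ0
  apply concaveOn_limit
    (F := fun n x => Real.exp (Real.log n
      + (t-s)⁻¹ * ∑ j ∈ range (n+1), (Real.log (x+s+j) - Real.log (x+t+j))) - x)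
  · intro n
    exact concave_approx s t (Real.log n) hs h1 (n+1)
  · intro x hx
    have hx0 : 0 < x := hx
    have hxs : 0 < x + s := by linarith
    have hxt : 0 < x + t := by linarith
    have hGs : 0 < Real.Gamma (x+s) := Real.Gamma_pos_of_pos hxs
    have hGt : 0 < Real.Gamma (x+t) := Real.Gamma_pos_of_pos hxt
    have hR : 0 < Real.Gamma (x+t) / Real.Gamma (x+s) := by positivity
    have htends : Tendsto (fun n => Real.GammaSeq (x+t) n / Real.GammaSeq (x+s) n) atTop
        (𝓝 (Real.Gamma (x+t) / Real.Gamma (x+s))) :=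
      (Real.GammaSeq_tendsto_Gamma (x+t)).div (Real.GammaSeq_tendsto_Gamma (x+s)) (ne_of_gt hGs)
    have htends2 : Tendsto (fun n => (Real.GammaSeq (x+t) n / Real.GammaSeq (x+s) n)
        ^ ((1:ℝ)/(t-s)) - x) atTop (𝓝 (z s t x)) := by
      unfold z
      exact (htends.rpow_const (Or.inl (ne_of_gt hR))).sub_const x
    refine Tendsto.congr' ?_ htends2
    rw [Filter.EventuallyEq, eventually_atTop]
    refine ⟨1, fun n hn => ?_⟩
    have hnpos : (0:ℝ) < n := by exact_mod_cast hn
    have hposs : ∀ j : ℕ, 0 < x + s + j := fun j => by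
      have := Nat.cast_nonneg (α := ℝ) j; linarith
    have hpost : ∀ j : ℕ, 0 < x + t + j := fun j => by
      have := Nat.cast_nonneg (α := ℝ) j; linarith
    have hPs : 0 < ∏ j ∈ range (n+1), (x + s + j) := Finset.prod_pos fun j _ => hposs j
    have hPt : 0 < ∏ j ∈ range (n+1), (x + t + j) := Finset.prod_pos fun j _ => hpost j
    have hfac : (0:ℝ) < (Nat.factorial n : ℝ) := by exact_mod_cast Nat.factorial_pos n
    have hrpow_s : (0:ℝ) < (n:ℝ) ^ (x+s) := Real.rpow_pos_of_pos hnpos _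
    have hrpow_t : (0:ℝ) < (n:ℝ) ^ (x+t) := Real.rpow_pos_of_pos hnpos _
    have hratio : Real.GammaSeq (x+t) n / Real.GammaSeq (x+s) n
        = (n:ℝ)^(t-s) * ((∏ j ∈ range (n+1), (x + s + j)) / (∏ j ∈ range (n+1), (x + t + j))) := by
      rw [Real.GammaSeq, Real.GammaSeq]
      have hnr : (n:ℝ)^(x+t) = (n:ℝ)^(t-s) * (n:ℝ)^(x+s) := by
        rw [← Real.rpow_add hnpos]; ring_nf
      field_simp
      rw [hnr]; ring
    have hlog : Real.log (Real.GammaSeq (x+t) n / Real.GammaSeq (x+s) n)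
        = (t-s) * Real.log n
          + ∑ j ∈ range (n+1), (Real.log (x+s+j) - Real.log (x+t+j)) := by
      rw [hratio, Real.log_mul (by positivity) (by positivity), Real.log_rpow hnpos,
        Real.log_div (ne_of_gt hPs) (ne_of_gt hPt),
        Real.log_prod (fun j _ => ne_of_gt (hposs j)),
        Real.log_prod (fun j _ => ne_of_gt (hpost j)),
        Finset.sum_sub_distrib]
    have hratio_pos : 0 < Real.GammaSeq (x+t) n / Real.GammaSeq (x+s) n := by
      rw [hratio]; positivity
    rw [Real.rpow_def_of_pos hratio_pos, hlog]
    congr 2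
    field_simp

lemma concaveOn_congr_Ioi {f g : ℝ → ℝ} (hc : ConcaveOn ℝ (Set.Ioi (0:ℝ)) g)
    (heq : ∀ x ∈ Set.Ioi (0:ℝ), f x = g x) : ConcaveOn ℝ (Set.Ioi (0:ℝ)) f := by
  refine ⟨convex_Ioi 0, fun x hx y hy a b ha hb hab => ?_⟩
  have hm : a • x + b • y ∈ Set.Ioi (0:ℝ) := (convex_Ioi 0) hx hy ha hb hab
  rw [heq _ hx, heq _ hy, heq _ hm]
  exact hc.2 hx hy ha hb hab

theorem z_concave (s t : ℝ) (hs : 0 ≤ s) (ht : 0 ≤ t) (h1 : 1 < |t - s|) :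
    ConcaveOn ℝ (Set.Ioi 0) (z s t) := by
  rcases lt_abs.mp h1 with h | h
  · exact z_concave_of_lt s t hs h
  · have h' : 1 < s - t := by linarith
    refine concaveOn_congr_Ioi (z_concave_of_lt t s ht h') (fun x hx => ?_)
    have hx0 : 0 < x := hx
    have hGs : 0 < Real.Gamma (x+s) := Real.Gamma_pos_of_pos (by linarith)
    have hGt : 0 < Real.Gamma (x+t) := Real.Gamma_pos_of_pos (by linarith)
    unfold z
    have hR : 0 < Real.Gamma (x+t) / Real.Gamma (x+s) := by positivity
    have hne : s - t ≠ 0 := by intro h0; rw [h0] at h'; norm_num at h'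
    congr 1
    have h1d : (1:ℝ)/(t-s) = -((1:ℝ)/(s-t)) := by
      rw [show t-s = -(s-t) by ring, div_neg]
    rw [h1d, Real.rpow_neg (le_of_lt hR), ← Real.inv_rpow (le_of_lt hR), inv_div]
end
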